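/- arXiv:1511.02366 — 4 statements merged into one kernel-verified Lean document; each statement's English description precedes it below -/
import Mathlib

section
/- Let k > 1 be a real number and let g : (0,1) → ℝ be weakly differentiable with ∫₀¹ s^k (g(s)² + g'(s)²) ds < ∞. Then there exists a constant C > 0, depending only on k, such that ∫₀¹ s^{k−2} g(s)² ds ≤ C ∫₀¹ s^k (g(s)² + g'(s)²) ds. -/
open MeasureTheory Set

private lemma hardy_amgm (l x y : ℝ) (hl : 0 < l) :
    -(l * x ^ 2 + l⁻¹ * y ^ 2) ≤ 2 * (x * y) := by
  have h1 : 0 ≤ (l * x + y) ^ 2 := sq_nonneg _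
  have h2 : l * (l * x ^ 2 + l⁻¹ * y ^ 2 + 2 * (x * y)) = (l * x + y) ^ 2 := by
    field_simp; ring
  nlinarith [mul_pos hl hl]

set_option maxHeartbeats 2000000 in
/-- Hardy inequality, first case (`k > 1`): for a weakly differentiable function `g` on `(0,1)`
with `∫₀¹ s^k (g² + g'²) ds < ∞`, one has
`∫₀¹ s^{k-2} g² ds ≤ C ∫₀¹ s^k (g² + g'²) ds` with `C` depending only on `k`. -/
theorem hardy_inequality_k_gt_one (k : ℝ) (hk : 1 < k) :
    ∃ C : ℝ, 0 < C ∧ ∀ g g' : ℝ → ℝ,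
      (∀ s ∈ Ioo (0:ℝ) 1, HasDerivAt g (g' s) s) →
      IntegrableOn (fun s => s ^ k * ((g s) ^ 2 + (g' s) ^ 2)) (Ioo (0:ℝ) 1) →
      ∫ s in Ioo (0:ℝ) 1, s ^ (k - 2) * (g s) ^ 2 ≤
        C * ∫ s in Ioo (0:ℝ) 1, s ^ k * ((g s) ^ 2 + (g' s) ^ 2) := by
  have hk1 : (0:ℝ) < k - 1 := by linarith
  set c2 : ℝ := 2 / (k - 1) with hc2def
  have hc2 : 0 < c2 := div_pos two_pos hk1
  have h2k : (0:ℝ) < 2 ^ k := Real.rpow_pos_of_pos two_pos k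
  refine ⟨c2 * (4 * 2 ^ k) + c2 ^ 2 + 4,
    add_pos (add_pos (mul_pos hc2 (by positivity)) (pow_pos hc2 2)) (by norm_num), ?_⟩
  intro g g' hg hint
  -- continuity and measurability
  have hgc : ContinuousOn g (Ioo 0 1) := fun s hs => (hg s hs).continuousAt.continuousWithinAt
  have hrc : ∀ c : ℝ, ContinuousOn (fun s : ℝ => s ^ c) (Ioo (0:ℝ) 1) := fun c s hs =>
    (Real.continuousAt_rpow_const s c (Or.inl (ne_of_gt hs.1))).continuousWithinAt
  have hg'm : AEStronglyMeasurable g' (volume.restrict (Ioo (0:ℝ) 1)) :=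
    (measurable_deriv g).aestronglyMeasurable.congr
      ((ae_restrict_iff' measurableSet_Ioo).2 (Filter.Eventually.of_forall fun s hs =>
        (hg s hs).deriv))
  have hwm : AEStronglyMeasurable (fun s => s ^ k * g s ^ 2) (volume.restrict (Ioo (0:ℝ) 1)) :=
    ((hrc k).mul (hgc.pow 2)).aestronglyMeasurable measurableSet_Ioo
  have hw'm : AEStronglyMeasurable (fun s => s ^ k * g' s ^ 2) (volume.restrict (Ioo (0:ℝ) 1)) := by
    have h := (((hrc k).aestronglyMeasurable measurableSet_Ioo).mul (hg'm.mul hg'm))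
    exact h.congr (Filter.Eventually.of_forall fun s => by simp [pow_two])
  have hnn : ∀ s ∈ Ioo (0:ℝ) 1, (0:ℝ) ≤ s ^ k := fun s hs => Real.rpow_nonneg hs.1.le k
  -- splitting the integrability hypothesis
  have hw : IntegrableOn (fun s => s ^ k * g s ^ 2) (Ioo (0:ℝ) 1) := by
    refine hint.mono' hwm ((ae_restrict_iff' measurableSet_Ioo).2
      (Filter.Eventually.of_forall fun s hs => ?_))
    have h1 := hnn s hs
    rw [Real.norm_eq_abs, abs_of_nonneg (mul_nonneg h1 (sq_nonneg _))]
    nlinarith [sq_nonneg (g' s)]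
  have hw' : IntegrableOn (fun s => s ^ k * g' s ^ 2) (Ioo (0:ℝ) 1) := by
    refine hint.mono' hw'm ((ae_restrict_iff' measurableSet_Ioo).2
      (Filter.Eventually.of_forall fun s hs => ?_))
    have h1 := hnn s hs
    rw [Real.norm_eq_abs, abs_of_nonneg (mul_nonneg h1 (sq_nonneg _))]
    nlinarith [sq_nonneg (g s)]
  set JG := ∫ s in Ioo (0:ℝ) 1, s ^ k * g s ^ 2 with hJGdef
  set J := ∫ s in Ioo (0:ℝ) 1, s ^ k * g' s ^ 2 with hJdef
  have hwnn : (0:ℝ→ℝ) ≤ᵐ[volume.restrict (Ioo (0:ℝ) 1)] (fun s => s ^ k * g s ^ 2) :=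
    (ae_restrict_iff' measurableSet_Ioo).2 (Filter.Eventually.of_forall fun s hs =>
      mul_nonneg (hnn s hs) (sq_nonneg _))
  have hw'nn : (0:ℝ→ℝ) ≤ᵐ[volume.restrict (Ioo (0:ℝ) 1)] (fun s => s ^ k * g' s ^ 2) :=
    (ae_restrict_iff' measurableSet_Ioo).2 (Filter.Eventually.of_forall fun s hs =>
      mul_nonneg (hnn s hs) (sq_nonneg _))
  have hIsum : ∫ s in Ioo (0:ℝ) 1, s ^ k * (g s ^ 2 + g' s ^ 2) = JG + J := by
    rw [hJGdef, hJdef, ← integral_add hw hw']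
    exact integral_congr_ae (Filter.Eventually.of_forall fun s => by ring)
  have hJG0 : 0 ≤ JG := setIntegral_nonneg measurableSet_Ioo fun s hs =>
    mul_nonneg (hnn s hs) (sq_nonneg _)
  have hJ0 : 0 ≤ J := setIntegral_nonneg measurableSet_Ioo fun s hs =>
    mul_nonneg (hnn s hs) (sq_nonneg _)
  -- selecting a good point a ∈ (1/2, 1)
  have hSsub : Ioo (1/2:ℝ) 1 ⊆ Ioo (0:ℝ) 1 := fun x hx => ⟨by linarith [hx.1], hx.2⟩
  have hdom : ∀ x ∈ Ioo (1/2:ℝ) 1, g x ^ 2 ≤ 2 ^ k * (x ^ k * g x ^ 2) := by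
    intro x hx
    have h1 : (1:ℝ) ≤ 2 ^ k * x ^ k := by
      have h := Real.rpow_le_rpow (by norm_num : (0:ℝ) ≤ 1)
        (by linarith [hx.1] : (1:ℝ) ≤ 2 * x) (by linarith : (0:ℝ) ≤ k)
      rwa [Real.one_rpow, Real.mul_rpow (by norm_num) (by linarith [hx.1] : (0:ℝ) ≤ x)] at h
    nlinarith [sq_nonneg (g x)]
  have hg2i : IntegrableOn (fun s => g s ^ 2) (Ioo (1/2:ℝ) 1) := by
    refine ((hw.mono_set hSsub).const_mul (2^k)).mono'
      (((hgc.mono hSsub).pow 2).aestronglyMeasurable measurableSet_Ioo) ?_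
    refine (ae_restrict_iff' measurableSet_Ioo).2 (Filter.Eventually.of_forall fun x hx => ?_)
    rw [Real.norm_eq_abs, abs_of_nonneg (sq_nonneg _)]
    exact hdom x hx
  set B := ∫ s in Ioo (1/2:ℝ) 1, g s ^ 2 with hBdef
  have hB0 : 0 ≤ B := setIntegral_nonneg measurableSet_Ioo fun s _ => sq_nonneg _
  have hBle : B ≤ 2 ^ k * JG := by
    calc B ≤ ∫ s in Ioo (1/2:ℝ) 1, 2^k * (s^k * g s^2) :=
        setIntegral_mono_on hg2i ((hw.mono_set hSsub).const_mul (2^k)) measurableSet_Ioo hdom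
      _ = 2^k * ∫ s in Ioo (1/2:ℝ) 1, s^k * g s^2 := integral_const_mul _ _
      _ ≤ 2^k * JG := by
          refine mul_le_mul_of_nonneg_left ?_ h2k.le
          exact setIntegral_mono_set hw hwnn (HasSubset.Subset.eventuallyLE hSsub)
  obtain ⟨a, haS, hga⟩ : ∃ a ∈ Ioo (1/2:ℝ) 1, g a ^ 2 ≤ 4 * B := by
    by_contra hcon
    push_neg at hcon
    have hvol : volume (Ioo (1/2:ℝ) 1) = ENNReal.ofReal (1/2) := by
      rw [Real.volume_Ioo]; norm_num
    have h2B : 2 * B ≤ B := by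
      have hconst : IntegrableOn (fun _ : ℝ => 4 * B) (Ioo (1/2:ℝ) 1) :=
        integrableOn_const (by rw [hvol]; exact ENNReal.ofReal_ne_top)
      have h := setIntegral_mono_on hconst hg2i measurableSet_Ioo (fun x hx => (hcon x hx).le)
      rwa [setIntegral_const, measureReal_def, hvol, ENNReal.toReal_ofReal (by norm_num : (0:ℝ) ≤ 1/2),
        smul_eq_mul, show (1/2:ℝ) * (4*B) = 2*B by ring] at h
    have hBz : B = 0 := le_antisymm (by linarith) hB0
    have hsupp : Function.support (fun s => g s ^ 2) ∩ Ioo (1/2:ℝ) 1 = Ioo (1/2:ℝ) 1 := by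
      refine inter_eq_right.2 fun x hx => ?_
      have h := hcon x hx
      rw [hBz] at h
      exact Function.mem_support.mpr (ne_of_gt (by linarith))
    have hpos : 0 < B := by
      refine (setIntegral_pos_iff_support_of_nonneg_ae
        (Filter.Eventually.of_forall fun x => sq_nonneg _) hg2i).2 ?_
      rw [hsupp, hvol]
      norm_num
    exact absurd hBz (ne_of_gt hpos)
  have ha0 : (0:ℝ) < a := lt_trans one_half_pos haS.1
  have ha1 : a < 1 := haS.2
  -- basic rpow facts
  have hIccsub : ∀ {ε : ℝ}, 0 < ε → Icc ε a ⊆ Ioo (0:ℝ) 1 := fun {ε} hε x hx =>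
    ⟨lt_of_lt_of_le hε hx.1, lt_of_le_of_lt hx.2 ha1⟩
  have hrow : ∀ ε x : ℝ, 0 < ε → ε ≤ x → x ^ (k-2) ≤ ε⁻¹ ^ 2 * x ^ k := by
    intro ε x hε hεx
    have hx0 : 0 < x := lt_of_lt_of_le hε hεx
    have hxk2 : x ^ (k-2) = x ^ k * (x ^ 2)⁻¹ := by
      rw [show k - 2 = k + (-2:ℝ) by ring, Real.rpow_add hx0, Real.rpow_neg hx0.le,
        show ((2:ℝ)) = ((2:ℕ):ℝ) by norm_num, Real.rpow_natCast]
    have hinv : (x^2)⁻¹ ≤ (ε^2)⁻¹ := by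
      apply inv_anti₀ (by positivity)
      nlinarith
    rw [hxk2]
    calc x^k * (x^2)⁻¹ ≤ x^k * (ε^2)⁻¹ :=
        mul_le_mul_of_nonneg_left hinv (Real.rpow_nonneg hx0.le k)
      _ = ε⁻¹^2 * x^k := by rw [inv_pow]; ring
  have hfIcc : ∀ {ε : ℝ}, 0 < ε → IntegrableOn (fun s => s^(k-2) * g s^2) (Icc ε a) := by
    intro ε hε
    refine ((hw.mono_set (hIccsub hε)).const_mul (ε⁻¹^2)).mono' ?_ ?_
    · exact (((hrc (k-2)).mono (hIccsub hε)).mul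
        ((hgc.mono (hIccsub hε)).pow 2)).aestronglyMeasurable measurableSet_Icc
    · refine (ae_restrict_iff' measurableSet_Icc).2 (Filter.Eventually.of_forall fun x hx => ?_)
      have hx0 : 0 < x := lt_of_lt_of_le hε hx.1
      rw [Real.norm_eq_abs, abs_of_nonneg (mul_nonneg (Real.rpow_nonneg hx0.le _) (sq_nonneg _))]
      calc x^(k-2) * g x^2 ≤ (ε⁻¹^2 * x^k) * g x^2 :=
          mul_le_mul_of_nonneg_right (hrow ε x hε hx.1) (sq_nonneg _)
        _ = ε⁻¹^2 * (x^k * g x^2) := by ring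
  have hsq : ∀ x : ℝ, 0 < x → ∀ p : ℝ, (x ^ p) ^ 2 = x ^ (2*p) := by
    intro x hx p
    rw [← Real.rpow_natCast (x^p) 2, ← Real.rpow_mul hx.le]
    norm_num [mul_comm]
  have hids : ∀ x : ℝ, 0 < x →
      (x^((k-2)/2) * g x)^2 = x^(k-2) * g x^2 ∧
      (x^(k/2) * g' x)^2 = x^k * g' x^2 ∧
      (x^((k-2)/2) * g x) * (x^(k/2) * g' x) = x^(k-1) * (g x * g' x) := by
    intro x hx0
    refine ⟨?_, ?_, ?_⟩
    · rw [mul_pow, hsq x hx0, show 2*((k-2)/2) = k-2 by ring]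
    · rw [mul_pow, hsq x hx0, show 2*(k/2) = k by ring]
    · rw [show x^((k-2)/2)*g x * (x^(k/2)*g' x) = x^((k-2)/2)*x^(k/2)*(g x*g' x) by ring,
        ← Real.rpow_add hx0, show (k-2)/2 + k/2 = k-1 by ring]
  have hptwise : ∀ x ∈ Ioo (0:ℝ) 1,
      -(((k-1)/2) * (x^(k-2) * g x^2) + c2 * (x^k * g' x^2)) ≤ 2 * (x^(k-1) * (g x * g' x)) := by
    intro x hx
    obtain ⟨hX, hY, hXY⟩ := hids x hx.1
    have hinv : ((k-1)/2)⁻¹ = c2 := by rw [hc2def, inv_div]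
    have h := hardy_amgm ((k-1)/2) (x^((k-2)/2) * g x) (x^(k/2) * g' x) (by linarith)
    rw [hX, hY, hXY, hinv] at h
    exact h
  set M := c2 * (g a ^ 2 + c2 * J) with hMdef
  -- key estimate on (ε, a)
  have key : ∀ ε ∈ Ioo (0:ℝ) a, ∫ s in Ioo ε a, s^(k-2) * g s^2 ≤ M := by
    intro ε hε
    have hε0 : 0 < ε := hε.1
    have hεa : ε ≤ a := hε.2.le
    have hsubIoo : Icc ε a ⊆ Ioo (0:ℝ) 1 := hIccsub hε0
    have hderiv : ∀ s ∈ uIcc ε a, HasDerivAt (fun x => x^(k-1) * g x^2)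
        ((k-1) * (s^(k-2) * g s^2) + 2 * (s^(k-1) * (g s * g' s))) s := by
      intro s hs
      rw [uIcc_of_le hεa] at hs
      have hs' : s ∈ Ioo (0:ℝ) 1 := hsubIoo hs
      have h1 : HasDerivAt (fun x:ℝ => x^(k-1)) ((k-1) * s^(k-1-1)) s :=
        Real.hasDerivAt_rpow_const (Or.inl (ne_of_gt hs'.1))
      have h2 : HasDerivAt (fun x => g x ^ 2) (((2:ℕ):ℝ) * g s ^ (2-1) * g' s) s :=
        (hg s hs').pow 2
      have h3 := h1.mul h2
      refine h3.congr_deriv ?_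
      rw [show k-1-1 = k-2 by ring]
      push_cast
      ring
    have hDIcc : IntegrableOn
        (fun s => (k-1) * (s^(k-2) * g s^2) + 2 * (s^(k-1) * (g s * g' s))) (Icc ε a) := by
      have hgg' : IntegrableOn (fun s => s^(k-1) * (g s * g' s)) (Icc ε a) := by
        refine ((hfIcc hε0).add (hw'.mono_set hsubIoo)).mono' ?_ ?_
        · exact ((((hrc (k-1)).mono hsubIoo).aestronglyMeasurable measurableSet_Icc).mul
            ((((hgc.mono hsubIoo).aestronglyMeasurable measurableSet_Icc)).mul
              (hg'm.mono_measure (Measure.restrict_mono hsubIoo le_rfl))))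
        · refine (ae_restrict_iff' measurableSet_Icc).2 (Filter.Eventually.of_forall fun x hx => ?_)
          have hx0 : 0 < x := (hsubIoo hx).1
          obtain ⟨hX, hY, hXY⟩ := hids x hx0
          rw [Real.norm_eq_abs, Pi.add_apply, ← hXY, ← hX, ← hY]
          exact abs_le.2 ⟨by nlinarith [sq_nonneg (x^((k-2)/2) * g x + x^(k/2) * g' x)],
            by nlinarith [sq_nonneg (x^((k-2)/2) * g x - x^(k/2) * g' x)]⟩
      exact ((hfIcc hε0).const_mul (k-1)).add (hgg'.const_mul 2)
    have hDint : IntervalIntegrable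
        (fun s => (k-1) * (s^(k-2) * g s^2) + 2 * (s^(k-1) * (g s * g' s))) volume ε a := by
      have h : IntegrableOn
          (fun s => (k-1) * (s^(k-2) * g s^2) + 2 * (s^(k-1) * (g s * g' s))) (uIcc ε a) := by
        rw [uIcc_of_le hεa]; exact hDIcc
      exact h.intervalIntegrable
    have hDcalc : ∫ s in ε..a, ((k-1) * (s^(k-2) * g s^2) + 2 * (s^(k-1) * (g s * g' s)))
        = a^(k-1) * g a^2 - ε^(k-1) * g ε^2 :=
      intervalIntegral.integral_eq_sub_of_hasDerivAt hderiv hDint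
    have hA : IntervalIntegrable (fun s => s^(k-2) * g s^2) volume ε a := by
      have h : IntegrableOn (fun s => s^(k-2) * g s^2) (uIcc ε a) := by
        rw [uIcc_of_le hεa]; exact hfIcc hε0
      exact h.intervalIntegrable
    have hB' : IntervalIntegrable (fun s => s^k * g' s^2) volume ε a := by
      have h : IntegrableOn (fun s => s^k * g' s^2) (uIcc ε a) := by
        rw [uIcc_of_le hεa]; exact hw'.mono_set hsubIoo
      exact h.intervalIntegrable
    have hEint : IntervalIntegrable
        (fun x => ((k-1)/2) * (x^(k-2) * g x^2) - c2 * (x^k * g' x^2)) volume ε a :=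
      (hA.const_mul _).sub (hB'.const_mul _)
    have hED : ∀ x ∈ Icc ε a,
        ((k-1)/2) * (x^(k-2) * g x^2) - c2 * (x^k * g' x^2) ≤
        (k-1) * (x^(k-2) * g x^2) + 2 * (x^(k-1) * (g x * g' x)) := by
      intro x hx
      have h := hptwise x (hsubIoo hx)
      linarith
    have hmono := intervalIntegral.integral_mono_on hεa hEint hDint hED
    have hsplit : ∫ x in ε..a, (((k-1)/2) * (x^(k-2) * g x^2) - c2 * (x^k * g' x^2))
        = ((k-1)/2) * (∫ x in ε..a, x^(k-2) * g x^2) - c2 * (∫ x in ε..a, x^k * g' x^2) := by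
      rw [intervalIntegral.integral_sub (hA.const_mul _) (hB'.const_mul _),
        intervalIntegral.integral_const_mul, intervalIntegral.integral_const_mul]
    have hJle : ∫ x in ε..a, x^k * g' x^2 ≤ J := by
      rw [intervalIntegral.integral_of_le hεa]
      exact setIntegral_mono_set hw' hw'nn (HasSubset.Subset.eventuallyLE
        (fun x hx => ⟨lt_trans hε0 hx.1, lt_of_le_of_lt hx.2 ha1⟩))
    have hbd : a^(k-1) * g a^2 - ε^(k-1) * g ε^2 ≤ g a^2 := by
      have h1 : a^(k-1) ≤ 1 := Real.rpow_le_one ha0.le ha1.le (by linarith)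
      nlinarith [Real.rpow_nonneg hε0.le (k-1), sq_nonneg (g ε), sq_nonneg (g a)]
    have hmain : ((k-1)/2) * (∫ x in ε..a, x^(k-2) * g x^2) ≤ g a^2 + c2 * J := by
      rw [hsplit, hDcalc] at hmono
      have h2 : c2 * (∫ x in ε..a, x^k * g' x^2) ≤ c2 * J :=
        mul_le_mul_of_nonneg_left hJle hc2.le
      linarith
    have hcc : c2 * ((k-1)/2) = 1 := by
      rw [hc2def, div_mul_div_comm]
      rw [div_eq_one_iff_eq (by positivity)]
      ring
    have hfin : ∫ x in ε..a, x^(k-2) * g x^2 ≤ M := by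
      calc ∫ x in ε..a, x^(k-2) * g x^2
          = c2 * (((k-1)/2) * ∫ x in ε..a, x^(k-2) * g x^2) := by
            rw [← mul_assoc, hcc, one_mul]
        _ ≤ c2 * (g a^2 + c2 * J) := mul_le_mul_of_nonneg_left hmain hc2.le
    rw [← integral_Ioc_eq_integral_Ioo, ← intervalIntegral.integral_of_le hεa]
    exact hfin
  -- pass to the limit ε → 0 using an a.e. cover
  set φ : ℕ → Set ℝ := fun n => Ioo (a/((n:ℝ)+2)) a with hφdef
  have hφmem : ∀ n : ℕ, a/((n:ℝ)+2) ∈ Ioo (0:ℝ) a := by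
    intro n
    have hn : (0:ℝ) ≤ (n:ℝ) := n.cast_nonneg
    exact ⟨by positivity, div_lt_self ha0 (by linarith)⟩
  have htend : Filter.Tendsto (fun n : ℕ => a/((n:ℝ)+2)) Filter.atTop (nhds 0) := by
    have h1 := (tendsto_const_div_atTop_nhds_zero_nat a).comp (Filter.tendsto_add_atTop_nat 2)
    refine h1.congr fun n => ?_
    simp only [Function.comp]
    push_cast
    ring_nf
  have hcover : AECover (volume.restrict (Ioo (0:ℝ) a)) Filter.atTop φ := by
    refine ⟨?_, fun n => measurableSet_Ioo⟩
    filter_upwards [ae_restrict_mem measurableSet_Ioo] with x hx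
    filter_upwards [htend.eventually_lt_const hx.1] with n hn
    exact ⟨hn, hx.2⟩
  have hφsub : ∀ n : ℕ, φ n ⊆ Ioo (0:ℝ) a := fun n x hx => ⟨lt_trans (hφmem n).1 hx.1, hx.2⟩
  have hres : ∀ n : ℕ, ((volume : Measure ℝ).restrict (Ioo (0:ℝ) a)).restrict (φ n)
      = (volume : Measure ℝ).restrict (φ n) := by
    intro n
    rw [Measure.restrict_restrict measurableSet_Ioo, inter_eq_left.2 (hφsub n)]
  have hfphi : ∀ n : ℕ, IntegrableOn (fun s => s^(k-2) * g s^2) (φ n)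
      ((volume : Measure ℝ).restrict (Ioo (0:ℝ) a)) := by
    intro n
    show Integrable _ _
    rw [hres n]
    exact (hfIcc (hφmem n).1).mono_set Ioo_subset_Icc_self
  have hbnd : ∀ n : ℕ, ∫ x in φ n, x^(k-2) * g x^2
      ∂((volume : Measure ℝ).restrict (Ioo (0:ℝ) a)) ≤ M := by
    intro n
    rw [hres n]
    exact key _ (hφmem n)
  have hnng' : ∀ᵐ x ∂((volume : Measure ℝ).restrict (Ioo (0:ℝ) a)), 0 ≤ x^(k-2) * g x^2 := by
    filter_upwards [ae_restrict_mem measurableSet_Ioo] with x hx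
    exact mul_nonneg (Real.rpow_nonneg hx.1.le _) (sq_nonneg _)
  have hfint : IntegrableOn (fun s => s^(k-2) * g s^2) (Ioo (0:ℝ) a) :=
    hcover.integrable_of_integral_bounded_of_nonneg_ae M hfphi hnng'
      (Filter.Eventually.of_forall hbnd)
  have hIooa : ∫ x in Ioo (0:ℝ) a, x^(k-2) * g x^2 ≤ M :=
    le_of_tendsto (hcover.integral_tendsto_of_countably_generated hfint)
      (Filter.Eventually.of_forall hbnd)
  -- the piece [a, 1)
  have hIcosub : Ico a 1 ⊆ Ioo (0:ℝ) 1 := fun x hx => ⟨lt_of_lt_of_le ha0 hx.1, hx.2⟩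
  have hdom2 : ∀ x ∈ Ico a 1, x^(k-2) * g x^2 ≤ 4 * (x^k * g x^2) := by
    intro x hx
    have hx0 : 0 < x := lt_of_lt_of_le ha0 hx.1
    have h1 : x^(k-2) ≤ a⁻¹^2 * x^k := hrow a x ha0 hx.1
    have h2 : a⁻¹^2 ≤ 4 := by
      have : a⁻¹ ≤ 2 := by
        rw [inv_le_comm₀ (by linarith) (by norm_num)]
        linarith [haS.1]
      nlinarith [inv_nonneg.2 ha0.le]
    have h3 : x^(k-2) ≤ 4 * x^k :=
      le_trans h1 (mul_le_mul_of_nonneg_right h2 (Real.rpow_nonneg hx0.le k))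
    calc x^(k-2) * g x^2 ≤ (4 * x^k) * g x^2 :=
        mul_le_mul_of_nonneg_right h3 (sq_nonneg _)
      _ = 4 * (x^k * g x^2) := by ring
  have hfinIco : IntegrableOn (fun s => s^(k-2) * g s^2) (Ico a 1) := by
    refine ((hw.mono_set hIcosub).const_mul 4).mono' ?_ ?_
    · exact (((hrc (k-2)).mono hIcosub).mul
        ((hgc.mono hIcosub).pow 2)).aestronglyMeasurable measurableSet_Ico
    · refine (ae_restrict_iff' measurableSet_Ico).2 (Filter.Eventually.of_forall fun x hx => ?_)
      rw [Real.norm_eq_abs, abs_of_nonneg (mul_nonneg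
        (Real.rpow_nonneg (le_of_lt (lt_of_lt_of_le ha0 hx.1)) _) (sq_nonneg _))]
      exact hdom2 x hx
  have hIco : ∫ x in Ico a 1, x^(k-2) * g x^2 ≤ 4 * JG := by
    calc ∫ x in Ico a 1, x^(k-2) * g x^2 ≤ ∫ x in Ico a 1, 4 * (x^k * g x^2) :=
        setIntegral_mono_on hfinIco ((hw.mono_set hIcosub).const_mul 4) measurableSet_Ico hdom2
      _ = 4 * ∫ x in Ico a 1, x^k * g x^2 := integral_const_mul _ _
      _ ≤ 4 * JG := by
          refine mul_le_mul_of_nonneg_left ?_ (by norm_num)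
          exact setIntegral_mono_set hw hwnn (HasSubset.Subset.eventuallyLE hIcosub)
  -- put everything together
  have hdisj : Disjoint (Ioo (0:ℝ) a) (Ico a 1) :=
    disjoint_left.2 fun x hx hx' => absurd hx.2 (not_lt.2 hx'.1)
  have hsplitset : ∫ s in Ioo (0:ℝ) 1, s^(k-2) * g s^2
      = (∫ s in Ioo (0:ℝ) a, s^(k-2) * g s^2) + ∫ s in Ico a 1, s^(k-2) * g s^2 := by
    rw [← Ioo_union_Ico_eq_Ioo ha0 ha1.le]
    exact setIntegral_union hdisj measurableSet_Ico hfint hfinIco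
  rw [hIsum, hsplitset]
  have h1 : ∫ s in Ioo (0:ℝ) a, s^(k-2) * g s^2 ≤ c2 * (4 * 2^k) * JG + c2^2 * J := by
    refine le_trans hIooa ?_
    have hga4 : g a^2 ≤ 4 * (2^k * JG) := by nlinarith
    rw [hMdef]
    nlinarith [mul_le_mul_of_nonneg_left hga4 hc2.le]
  calc (∫ s in Ioo (0:ℝ) a, s^(k-2) * g s^2) + ∫ s in Ico a 1, s^(k-2) * g s^2
      ≤ (c2 * (4 * 2^k) * JG + c2^2 * J) + 4 * JG := add_le_add h1 hIco
    _ ≤ (c2 * (4 * 2^k) + c2^2 + 4) * (JG + J) := by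
        nlinarith [mul_nonneg (mul_nonneg hc2.le (by positivity : (0:ℝ) ≤ 4 * 2^k)) hJ0,
          mul_nonneg (sq_nonneg c2) hJG0, hJ0, hJG0]
end

section
/- Let k < 1 be a real number and let g : (0,1) → ℝ be weakly differentiable with ∫₀¹ s^k (g(s)² + g'(s)²) ds < ∞. Then g has a trace at s = 0, i.e. the limit g(0) := lim_{s→0⁺} g(s) exists, and there exists a constant C > 0, depending only on k, such that ∫₀¹ s^{k−2} (g(s) − g(0))² ds ≤ C ∫₀¹ s^k g'(s)² ds. -/
open MeasureTheory Set
open scoped ENNReal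

-- helper 1: Cauchy-Schwarz for lintegral
lemma lint_cs (μ : Measure ℝ) (F G : ℝ → ℝ≥0∞) (hF : AEMeasurable F μ) (hG : AEMeasurable G μ) :
    (∫⁻ t, F t * G t ∂μ) ^ 2 ≤ (∫⁻ t, F t ^ 2 ∂μ) * (∫⁻ t, G t ^ 2 ∂μ) := by
  have hpq : Real.HolderConjugate 2 2 := Real.holderConjugate_iff.mpr ⟨one_lt_two, by norm_num⟩
  have h := ENNReal.lintegral_mul_le_Lp_mul_Lq μ hpq hF hG
  calc (∫⁻ t, F t * G t ∂μ) ^ 2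
      ≤ ((∫⁻ a, F a ^ (2:ℝ) ∂μ) ^ (1/2:ℝ) * (∫⁻ a, G a ^ (2:ℝ) ∂μ) ^ (1/2:ℝ)) ^ 2 := by
        exact pow_le_pow_left' h 2
    _ = (∫⁻ t, F t ^ 2 ∂μ) * (∫⁻ t, G t ^ 2 ∂μ) := by
        rw [mul_pow, ← ENNReal.rpow_natCast ((∫⁻ a, F a ^ (2:ℝ) ∂μ) ^ (1/2:ℝ)) 2,
          ← ENNReal.rpow_natCast ((∫⁻ a, G a ^ (2:ℝ) ∂μ) ^ (1/2:ℝ)) 2,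
          ← ENNReal.rpow_mul, ← ENNReal.rpow_mul]
        norm_num

-- helper 2: lintegral of t^c on Ioo 0 s, c > -1
lemma lint_rpow_Ioo {c : ℝ} (hc : -1 < c) {s : ℝ} (hs : 0 < s) :
    ∫⁻ t in Ioo (0:ℝ) s, ENNReal.ofReal (t ^ c) = ENNReal.ofReal (s ^ (c+1) / (c+1)) := by
  rw [← ofReal_integral_eq_lintegral_ofReal ((intervalIntegral.integrableOn_Ioo_rpow_iff hs).2 hc)]
  · congr 1
    rw [← integral_Ioc_eq_integral_Ioo, ← intervalIntegral.integral_of_le hs.le,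
      integral_rpow (Or.inl hc), Real.zero_rpow (by linarith), sub_zero]
  · filter_upwards [ae_restrict_mem measurableSet_Ioo] with t ht
    exact Real.rpow_nonneg ht.1.le c

-- helper 3: lintegral of s^c on Ioo t 1, c < -1
lemma lint_rpow_Ioo_le {c : ℝ} (hc : c < -1) {t : ℝ} (ht : 0 < t) (ht1 : t ≤ 1) :
    ∫⁻ s in Ioo t (1:ℝ), ENNReal.ofReal (s ^ c) ≤ ENNReal.ofReal (t ^ (c+1) / (-(c+1))) := by
  have h0 : (0:ℝ) ∉ Set.uIcc t (1:ℝ) := by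
    rw [Set.uIcc_of_le ht1]; rintro ⟨h1, -⟩; linarith
  have hint : IntegrableOn (fun s : ℝ => s ^ c) (Ioo t 1) := by
    rw [← intervalIntegrable_iff_integrableOn_Ioo_of_le ht1]
    exact intervalIntegral.intervalIntegrable_rpow (Or.inr h0)
  rw [← ofReal_integral_eq_lintegral_ofReal hint]
  · apply ENNReal.ofReal_le_ofReal
    rw [← integral_Ioc_eq_integral_Ioo, ← intervalIntegral.integral_of_le ht1,
      integral_rpow (Or.inr ⟨by linarith, h0⟩)]
    rw [Real.one_rpow]
    have hneg : c + 1 < 0 := by linarith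
    have h1 : (1 - t ^ (c+1)) / (c+1) = (t ^ (c+1) - 1) / (-(c+1)) := by
      rw [div_eq_div_iff (by linarith) (by linarith)]; ring
    rw [h1]
    gcongr
    · linarith
    · linarith
  · filter_upwards [ae_restrict_mem measurableSet_Ioo] with s hs
    exact Real.rpow_nonneg (by linarith [hs.1]) c

/-- Hardy inequality, second case (`k < 1`): for a weakly differentiable function `g` on `(0,1)`
with `∫₀¹ s^k (g² + g'²) ds < ∞`, the trace `g(0) = lim_{s→0⁺} g(s)` exists and
`∫₀¹ s^{k-2} (g - g(0))² ds ≤ C ∫₀¹ s^k g'² ds` with `C` depending only on `k`. -/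
theorem hardy_inequality_k_lt_one (k : ℝ) (hk : k < 1) :
    ∃ C : ℝ, 0 < C ∧ ∀ g g' : ℝ → ℝ,
      (∀ s ∈ Ioo (0:ℝ) 1, HasDerivAt g (g' s) s) →
      IntegrableOn (fun s => s ^ k * ((g s) ^ 2 + (g' s) ^ 2)) (Ioo (0:ℝ) 1) →
      ∃ g0 : ℝ, Filter.Tendsto g (nhdsWithin 0 (Ioi 0)) (nhds g0) ∧
        ∫ s in Ioo (0:ℝ) 1, s ^ (k - 2) * (g s - g0) ^ 2 ≤
          C * ∫ s in Ioo (0:ℝ) 1, s ^ k * (g' s) ^ 2 := by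
  have h1k : (0:ℝ) < 1 - k := by linarith
  refine ⟨4 / (1-k)^2, by positivity, ?_⟩
  intro g f hder hint
  set μ : Measure ℝ := volume.restrict (Ioo 0 1) with hμ
  have hfd : ∀ s ∈ Ioo (0:ℝ) 1, deriv g s = f s := fun s hs => (hder s hs).deriv
  have hgc : ContinuousOn g (Ioo 0 1) :=
    fun s hs => ((hder s hs).continuousAt).continuousWithinAt
  have hgm : AEMeasurable g μ := hgc.aemeasurable measurableSet_Ioo
  have hdm : Measurable (deriv g) := measurable_deriv g
  -- integrability of s^k * f^2
  have haef : f =ᵐ[μ] deriv g :=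
    (ae_restrict_iff' measurableSet_Ioo).2 (Filter.Eventually.of_forall
      (fun s hs => (hfd s hs).symm))
  have hfm : AEMeasurable f μ := hdm.aemeasurable.congr haef.symm
  have hrpm : ∀ c : ℝ, Measurable fun s : ℝ => s ^ c :=
    fun c => measurable_id.pow measurable_const
  have hint2 : IntegrableOn (fun s => s ^ k * f s ^ 2) (Ioo 0 1) := by
    refine Integrable.mono' hint
      (((hrpm k).aemeasurable.mul (hfm.mul hfm)).congr ?_).aestronglyMeasurable ?_
    · exact Filter.Eventually.of_forall (fun s => by simp [sq])
    · filter_upwards [ae_restrict_mem measurableSet_Ioo] with s hs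
      have h1 : (0:ℝ) ≤ s ^ k := Real.rpow_nonneg hs.1.le k
      have h2 : (0:ℝ) ≤ s ^ k * (g s ^ 2 + f s ^ 2) := by positivity
      rw [Real.norm_eq_abs, abs_of_nonneg (by positivity)]
      nlinarith [sq_nonneg (g s), sq_nonneg (f s)]
  -- integrability of f on (0,1)
  have hfint : IntegrableOn f (Ioo 0 1) := by
    have hmaj : IntegrableOn (fun s => (s ^ k * f s ^ 2 + s ^ (-k)) / 2) (Ioo 0 1) :=
      (hint2.add ((intervalIntegral.integrableOn_Ioo_rpow_iff one_pos).2
        (by linarith : (-1:ℝ) < -k))).div_const 2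
    refine Integrable.mono' hmaj hfm.aestronglyMeasurable ?_
    filter_upwards [ae_restrict_mem measurableSet_Ioo] with s hs
    have hs0 : (0:ℝ) < s := hs.1
    have e1 : s ^ (k/2) * s ^ (-(k/2)) = 1 := by
      rw [← Real.rpow_add hs0]; simp
    have e2 : (s ^ (k/2)) ^ 2 = s ^ k := by
      rw [← Real.rpow_natCast (s ^ (k/2)) 2, ← Real.rpow_mul hs0.le]; norm_num
    have e3 : (s ^ (-(k/2))) ^ 2 = s ^ (-k) := by
      rw [← Real.rpow_natCast (s ^ (-(k/2))) 2, ← Real.rpow_mul hs0.le]; norm_num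
    rw [Real.norm_eq_abs]
    nlinarith [sq_nonneg (s ^ (k/2) * |f s| - s ^ (-(k/2))), sq_abs (f s),
      abs_nonneg (f s), Real.rpow_nonneg hs0.le (k/2), Real.rpow_nonneg hs0.le (-(k/2))]
  -- the primitive of |f|
  set F : ℝ → ℝ := fun x => ∫ t in Ioc (0:ℝ) x, |f t|
  have htendF : Filter.Tendsto F (nhdsWithin 0 (Ioi 0)) (nhds 0) := by
    have hIcc : IntegrableOn (fun t => |f t|) (Icc 0 1) :=
      IntegrableOn.congr_set_ae hfint.abs Ioo_ae_eq_Icc.symm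
    have hcontF : ContinuousOn F (Icc 0 1) := intervalIntegral.continuousOn_primitive hIcc
    have h0 : F 0 = 0 := by simp [F]
    have ht := (hcontF 0 ⟨le_rfl, zero_le_one⟩).mono_left
      (nhdsWithin_mono _ Ioo_subset_Icc_self)
    rw [h0] at ht
    rwa [← nhdsWithin_Ioo_eq_nhdsGT zero_lt_one]
  set g0 : ℝ := g (1/2) - ∫ t in Ioo (0:ℝ) (1/2), f t with hg0
  have hhalf : (1/2 : ℝ) ∈ Ioo (0:ℝ) 1 := by norm_num
  have hii : ∀ x y : ℝ, x ∈ Ioo (0:ℝ) 1 → y ∈ Ioo (0:ℝ) 1 →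
      IntervalIntegrable f volume x y := by
    intro x y hx hy
    rw [intervalIntegrable_iff]
    exact hfint.mono_set (Set.uIoc_subset_uIcc.trans (Set.ordConnected_Ioo.uIcc_subset hx hy))
  have hii0 : ∀ y : ℝ, y ∈ Ioo (0:ℝ) 1 → IntervalIntegrable f volume 0 y := by
    intro y hy
    rw [intervalIntegrable_iff, Set.uIoc_of_le hy.1.le]
    exact hfint.mono_set (fun t ht => ⟨ht.1, lt_of_le_of_lt ht.2 hy.2⟩)
  have key : ∀ s ∈ Ioo (0:ℝ) 1, g s - g0 = ∫ t in Ioo (0:ℝ) s, f t := by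
    intro s hs
    have hsub : Set.uIcc (1/2 : ℝ) s ⊆ Ioo 0 1 :=
      Set.ordConnected_Ioo.uIcc_subset hhalf hs
    have hFTC : ∫ t in (1/2 : ℝ)..s, f t = g s - g (1/2) :=
      intervalIntegral.integral_eq_sub_of_hasDerivAt
        (fun x hx => hder x (hsub hx)) (hii _ _ hhalf hs)
    have hsplit : (∫ t in (0:ℝ)..s, f t) - ∫ t in (0:ℝ)..(1/2:ℝ), f t
        = ∫ t in (1/2:ℝ)..s, f t :=
      intervalIntegral.integral_interval_sub_left (hii0 s hs) (hii0 _ hhalf)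
    have e1 : ∫ t in (0:ℝ)..s, f t = ∫ t in Ioo (0:ℝ) s, f t := by
      rw [intervalIntegral.integral_of_le hs.1.le, integral_Ioc_eq_integral_Ioo]
    have e2 : ∫ t in (0:ℝ)..(1/2:ℝ), f t = ∫ t in Ioo (0:ℝ) (1/2:ℝ), f t := by
      rw [intervalIntegral.integral_of_le (by norm_num), integral_Ioc_eq_integral_Ioo]
    rw [e1, e2] at hsplit
    rw [hg0]
    linarith [hFTC, hsplit]
  have htrace : Filter.Tendsto g (nhdsWithin 0 (Ioi 0)) (nhds g0) := by
    have hmem : Ioo (0:ℝ) 1 ∈ nhdsWithin (0:ℝ) (Ioi 0) := by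
      rw [← nhdsWithin_Ioo_eq_nhdsGT zero_lt_one]; exact self_mem_nhdsWithin
    have habs : Filter.Tendsto (fun s => |g s - g0|) (nhdsWithin 0 (Ioi 0)) (nhds 0) := by
      refine squeeze_zero' (Filter.Eventually.of_forall fun s => abs_nonneg _) ?_ htendF
      filter_upwards [hmem] with s hs
      rw [key s hs, ← integral_Ioc_eq_integral_Ioo]
      calc |∫ t in Ioc (0:ℝ) s, f t| ≤ ∫ t in Ioc (0:ℝ) s, |f t| := by
            simpa [Real.norm_eq_abs] using
              norm_integral_le_integral_norm (f := f) (μ := volume.restrict (Ioc 0 s))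
        _ = F s := rfl
    rw [tendsto_iff_dist_tendsto_zero]
    simpa [Real.dist_eq] using habs
  refine ⟨g0, htrace, ?_⟩
  set α : ℝ := (k+1)/2 with hαdef
  have hα1 : α < 1 := by rw [hαdef]; linarith
  set D : ℝ → ℝ≥0∞ := fun t => ENNReal.ofReal (t ^ α * (deriv g t)^2) with hD
  have hDm : Measurable D := ((hrpm α).mul (hdm.pow_const 2)).ennreal_ofReal
  have hDtop : ∀ t, D t ≠ ⊤ := fun t => ENNReal.ofReal_ne_top
  -- Cauchy-Schwarz step
  have hCS : ∀ s ∈ Ioo (0:ℝ) 1, ENNReal.ofReal ((g s - g0)^2) ≤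
      (∫⁻ t in Ioo (0:ℝ) s, D t) * ENNReal.ofReal (s ^ (1-α) / (1-α)) := by
    intro s hs
    have hs0 : (0:ℝ) < s := hs.1
    have hsub : Ioo (0:ℝ) s ⊆ Ioo (0:ℝ) 1 := fun t ht => ⟨ht.1, ht.2.trans hs.2⟩
    have hfs : IntegrableOn f (Ioo 0 s) := hfint.mono_set hsub
    have h1 : (g s - g0)^2 ≤ (∫ t in Ioo (0:ℝ) s, |f t|)^2 := by
      rw [key s hs, ← sq_abs (∫ t in Ioo (0:ℝ) s, f t)]
      have hb : |∫ t in Ioo (0:ℝ) s, f t| ≤ ∫ t in Ioo (0:ℝ) s, |f t| := by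
        simpa [Real.norm_eq_abs] using
          norm_integral_le_integral_norm (f := f) (μ := volume.restrict (Ioo 0 s))
      exact pow_le_pow_left₀ (abs_nonneg _) hb 2
    have h2 : ENNReal.ofReal ((∫ t in Ioo (0:ℝ) s, |f t|)^2)
        = (∫⁻ t in Ioo (0:ℝ) s, ENNReal.ofReal |f t|) ^ 2 := by
      rw [← ofReal_integral_eq_lintegral_ofReal hfs.abs
        (Filter.Eventually.of_forall fun t => abs_nonneg _), ← ENNReal.ofReal_pow
        (setIntegral_nonneg measurableSet_Ioo fun t ht => abs_nonneg _)]
    set F1 : ℝ → ℝ≥0∞ := fun t => ENNReal.ofReal (t ^ (α/2) * |deriv g t|) with hF1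
    set G1 : ℝ → ℝ≥0∞ := fun t => ENNReal.ofReal (t ^ (-(α/2))) with hG1
    have h3 : (∫⁻ t in Ioo (0:ℝ) s, ENNReal.ofReal |f t|)
        = ∫⁻ t in Ioo (0:ℝ) s, F1 t * G1 t := by
      apply setLIntegral_congr_fun_ae measurableSet_Ioo
      apply Filter.Eventually.of_forall
      intro t ht
      rw [hF1, hG1, ← ENNReal.ofReal_mul
        (mul_nonneg (Real.rpow_nonneg ht.1.le _) (abs_nonneg _))]
      congr 1
      rw [← hfd t (hsub ht), mul_comm (t ^ (α/2)) _, mul_assoc, ← Real.rpow_add ht.1]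
      simp [abs_mul]
    have hcs := lint_cs (volume.restrict (Ioo 0 s)) F1 G1
      (((hrpm (α/2)).mul hdm.abs).ennreal_ofReal.aemeasurable)
      ((hrpm (-(α/2))).ennreal_ofReal.aemeasurable)
    have h4 : (∫⁻ t in Ioo (0:ℝ) s, F1 t ^ 2) = ∫⁻ t in Ioo (0:ℝ) s, D t := by
      apply setLIntegral_congr_fun_ae measurableSet_Ioo
      apply Filter.Eventually.of_forall
      intro t ht
      rw [hF1, hD, ← ENNReal.ofReal_pow
        (mul_nonneg (Real.rpow_nonneg ht.1.le _) (abs_nonneg _))]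
      congr 1
      rw [mul_pow, sq_abs, ← Real.rpow_natCast (t ^ (α/2)) 2, ← Real.rpow_mul ht.1.le]
      norm_num
    have h5 : (∫⁻ t in Ioo (0:ℝ) s, G1 t ^ 2) = ENNReal.ofReal (s ^ (1-α) / (1-α)) := by
      have e : ∀ᵐ t ∂(volume : Measure ℝ), t ∈ Ioo (0:ℝ) s →
          G1 t ^ 2 = ENNReal.ofReal (t ^ (-α)) := by
        apply Filter.Eventually.of_forall
        intro t ht
        rw [hG1, ← ENNReal.ofReal_pow (Real.rpow_nonneg ht.1.le _)]
        congr 1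
        rw [← Real.rpow_natCast (t ^ (-(α/2))) 2, ← Real.rpow_mul ht.1.le]
        norm_num
      calc (∫⁻ t in Ioo (0:ℝ) s, G1 t ^ 2)
          = ∫⁻ t in Ioo (0:ℝ) s, ENNReal.ofReal (t ^ (-α)) :=
            setLIntegral_congr_fun_ae measurableSet_Ioo e
        _ = ENNReal.ofReal (s ^ (-α+1) / (-α+1)) := lint_rpow_Ioo (by linarith) hs0
        _ = ENNReal.ofReal (s ^ (1-α) / (1-α)) := by rw [neg_add_eq_sub]
    calc ENNReal.ofReal ((g s - g0)^2)
        ≤ ENNReal.ofReal ((∫ t in Ioo (0:ℝ) s, |f t|)^2) := ENNReal.ofReal_le_ofReal h1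
      _ = (∫⁻ t in Ioo (0:ℝ) s, F1 t * G1 t) ^ 2 := by rw [h2, h3]
      _ ≤ (∫⁻ t in Ioo (0:ℝ) s, F1 t ^ 2) * (∫⁻ t in Ioo (0:ℝ) s, G1 t ^ 2) := hcs
      _ = (∫⁻ t in Ioo (0:ℝ) s, D t) * ENNReal.ofReal (s ^ (1-α) / (1-α)) := by
          rw [h4, h5]
  set c2 : ℝ := (k-3)/2 with hc2def
  set A : ℝ≥0∞ := ∫⁻ t in Ioo (0:ℝ) 1, ENNReal.ofReal (t ^ k * (deriv g t)^2) with hA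
  set L : ℝ≥0∞ := ∫⁻ s in Ioo (0:ℝ) 1, ENNReal.ofReal (s ^ (k-2) * (g s - g0)^2) with hL
  have hconst : (0:ℝ) ≤ 2/(1-k) := by positivity
  have step1 : L ≤ ENNReal.ofReal (2/(1-k)) *
      ∫⁻ s in Ioo (0:ℝ) 1, ENNReal.ofReal (s ^ c2) * ∫⁻ t in Ioo (0:ℝ) s, D t := by
    rw [hL, ← lintegral_const_mul' _ _ ENNReal.ofReal_ne_top]
    apply lintegral_mono_ae
    filter_upwards [ae_restrict_mem measurableSet_Ioo] with s hs
    have hs0 : (0:ℝ) < s := hs.1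
    have ediv : s ^ (1-α) / (1-α) = s ^ (1-α) * (2/(1-k)) := by
      rw [show (1:ℝ) - α = (1-k)/2 by rw [hαdef]; ring, div_eq_mul_inv, inv_div]
    calc ENNReal.ofReal (s ^ (k-2) * (g s - g0)^2)
        = ENNReal.ofReal (s ^ (k-2)) * ENNReal.ofReal ((g s - g0)^2) :=
          ENNReal.ofReal_mul (Real.rpow_nonneg hs0.le _)
      _ ≤ ENNReal.ofReal (s ^ (k-2)) *
            ((∫⁻ t in Ioo (0:ℝ) s, D t) * ENNReal.ofReal (s ^ (1-α) / (1-α))) :=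
          mul_le_mul_right (hCS s hs) _
      _ = ENNReal.ofReal (2/(1-k)) *
            (ENNReal.ofReal (s ^ c2) * ∫⁻ t in Ioo (0:ℝ) s, D t) := by
          rw [ediv, ENNReal.ofReal_mul (Real.rpow_nonneg hs0.le _)]
          have e2 : ENNReal.ofReal (s ^ (k-2)) * ENNReal.ofReal (s ^ (1-α))
              = ENNReal.ofReal (s ^ c2) := by
            rw [← ENNReal.ofReal_mul (Real.rpow_nonneg hs0.le _), ← Real.rpow_add hs0]
            congr 2
            rw [hc2def, hαdef]; ring
          calc ENNReal.ofReal (s ^ (k-2)) * ((∫⁻ t in Ioo (0:ℝ) s, D t) *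
                (ENNReal.ofReal (s ^ (1-α)) * ENNReal.ofReal (2/(1-k))))
              = ENNReal.ofReal (2/(1-k)) * ((ENNReal.ofReal (s ^ (k-2)) *
                  ENNReal.ofReal (s ^ (1-α))) * ∫⁻ t in Ioo (0:ℝ) s, D t) := by ring
            _ = ENNReal.ofReal (2/(1-k)) *
                  (ENNReal.ofReal (s ^ c2) * ∫⁻ t in Ioo (0:ℝ) s, D t) := by rw [e2]
  -- rewrite inner integral with indicators
  have hindic : ∀ s ∈ Ioo (0:ℝ) 1, (∫⁻ t in Ioo (0:ℝ) s, D t) =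
      ∫⁻ t, (Iio s).indicator D t ∂μ := by
    intro s hs
    have hset : Iio s ∩ Ioo (0:ℝ) 1 = Ioo 0 s := by
      ext t
      simp only [mem_inter_iff, mem_Iio, mem_Ioo]
      constructor
      · rintro ⟨h1, h2, h3⟩; exact ⟨h2, h1⟩
      · rintro ⟨h1, h2⟩; exact ⟨h2, h1, h2.trans hs.2⟩
    rw [hμ, lintegral_indicator measurableSet_Iio,
      Measure.restrict_restrict measurableSet_Iio, hset]
  -- Tonelli
  have hswap : (∫⁻ s in Ioo (0:ℝ) 1, ENNReal.ofReal (s ^ c2) * ∫⁻ t in Ioo (0:ℝ) s, D t)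
      = ∫⁻ t, (∫⁻ s, ENNReal.ofReal (s ^ c2) * (Iio s).indicator D t ∂μ) ∂μ := by
    have e1 : (∫⁻ s in Ioo (0:ℝ) 1, ENNReal.ofReal (s ^ c2) * ∫⁻ t in Ioo (0:ℝ) s, D t)
        = ∫⁻ s, (∫⁻ t, ENNReal.ofReal (s ^ c2) * (Iio s).indicator D t ∂μ) ∂μ := by
      rw [hμ]
      apply setLIntegral_congr_fun_ae measurableSet_Ioo
      apply Filter.Eventually.of_forall
      intro s hs
      rw [hindic s hs, ← lintegral_const_mul' _ _ ENNReal.ofReal_ne_top]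
    rw [e1]
    apply lintegral_lintegral_swap
    apply Measurable.aemeasurable
    have : (Function.uncurry fun s t => ENNReal.ofReal (s ^ c2) * (Iio s).indicator D t)
        = fun p : ℝ × ℝ => ENNReal.ofReal (p.1 ^ c2) *
            {q : ℝ × ℝ | q.2 < q.1}.indicator (fun q => D q.2) p := by
      ext p
      simp only [Function.uncurry, Set.indicator_apply, mem_Iio, mem_setOf_eq]
    rw [this]
    exact ((measurable_fst.pow measurable_const).ennreal_ofReal).mul
      ((hDm.comp measurable_snd).indicator (measurableSet_lt measurable_snd measurable_fst))
  -- inner bound after swap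
  have hinner : ∀ t ∈ Ioo (0:ℝ) 1,
      (∫⁻ s, ENNReal.ofReal (s ^ c2) * (Iio s).indicator D t ∂μ)
        ≤ ENNReal.ofReal (2/(1-k)) * ENNReal.ofReal (t ^ k * (deriv g t)^2) := by
    intro t ht
    have e1 : (fun s => ENNReal.ofReal (s ^ c2) * (Iio s).indicator D t)
        = (Ioi t).indicator (fun s => ENNReal.ofReal (s ^ c2) * D t) := by
      ext s
      simp only [Set.indicator_apply, mem_Iio, mem_Ioi]
      split_ifs <;> simp
    rw [e1, lintegral_indicator measurableSet_Ioi, hμ,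
      Measure.restrict_restrict measurableSet_Ioi]
    have e2 : Ioi t ∩ Ioo (0:ℝ) 1 = Ioo t 1 := by
      ext s
      simp only [mem_inter_iff, mem_Ioi, mem_Ioo]
      constructor
      · rintro ⟨h1, h2, h3⟩; exact ⟨h1, h3⟩
      · rintro ⟨h1, h2⟩; exact ⟨h1, ht.1.trans h1, h2⟩
    rw [e2, lintegral_mul_const' _ _ (hDtop t)]
    have e3 : (∫⁻ s in Ioo t 1, ENNReal.ofReal (s ^ c2))
        ≤ ENNReal.ofReal (t ^ (c2+1) / (-(c2+1))) :=
      lint_rpow_Ioo_le (by rw [hc2def]; linarith) ht.1 ht.2.le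
    calc (∫⁻ s in Ioo t 1, ENNReal.ofReal (s ^ c2)) * D t
        ≤ ENNReal.ofReal (t ^ (c2+1) / (-(c2+1))) * D t := mul_le_mul_left e3 _
      _ = ENNReal.ofReal (2/(1-k)) * ENNReal.ofReal (t ^ k * (deriv g t)^2) := by
          rw [hD, show t ^ (c2+1) / (-(c2+1)) = (2/(1-k)) * t ^ (c2+1) by
            rw [show -(c2+1) = (1-k)/2 by rw [hc2def]; ring, div_eq_mul_inv, inv_div]; ring]
          rw [ENNReal.ofReal_mul hconst, mul_assoc]
          congr 1
          rw [← ENNReal.ofReal_mul (Real.rpow_nonneg ht.1.le _)]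
          congr 1
          rw [← mul_assoc, ← Real.rpow_add ht.1]
          congr 2
          rw [hc2def, hαdef]; ring
  set R : ℝ := ∫ t in Ioo (0:ℝ) 1, t ^ k * f t ^ 2 with hR
  have hRnn : 0 ≤ R :=
    setIntegral_nonneg measurableSet_Ioo fun t ht =>
      mul_nonneg (Real.rpow_nonneg ht.1.le _) (sq_nonneg _)
  have step3 : L ≤ ENNReal.ofReal (4/(1-k)^2) * A := by
    have h6 : (∫⁻ t, (∫⁻ s, ENNReal.ofReal (s ^ c2) * (Iio s).indicator D t ∂μ) ∂μ)
        ≤ ENNReal.ofReal (2/(1-k)) * A := by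
      rw [hA, hμ, ← lintegral_const_mul' _ _ ENNReal.ofReal_ne_top]
      apply lintegral_mono_ae
      filter_upwards [ae_restrict_mem measurableSet_Ioo] with t ht
      exact hinner t ht
    calc L ≤ ENNReal.ofReal (2/(1-k)) *
          ∫⁻ s in Ioo (0:ℝ) 1, ENNReal.ofReal (s ^ c2) * ∫⁻ t in Ioo (0:ℝ) s, D t := step1
      _ = ENNReal.ofReal (2/(1-k)) *
          ∫⁻ t, (∫⁻ s, ENNReal.ofReal (s ^ c2) * (Iio s).indicator D t ∂μ) ∂μ := by rw [hswap]
      _ ≤ ENNReal.ofReal (2/(1-k)) * (ENNReal.ofReal (2/(1-k)) * A) :=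
          mul_le_mul_right h6 _
      _ = ENNReal.ofReal (4/(1-k)^2) * A := by
          rw [← mul_assoc, ← ENNReal.ofReal_mul hconst]
          congr 2
          rw [div_mul_div_comm]
          norm_num
          rw [sq]
  have hAR : A = ENNReal.ofReal R := by
    rw [hR, ofReal_integral_eq_lintegral_ofReal hint2 ?nn, hA]
    · apply setLIntegral_congr_fun_ae measurableSet_Ioo
      apply Filter.Eventually.of_forall
      intro t ht
      rw [hfd t ht]
    case nn =>
      filter_upwards [ae_restrict_mem measurableSet_Ioo] with t ht
      exact mul_nonneg (Real.rpow_nonneg ht.1.le _) (sq_nonneg _)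
  have hLHS : ∫ s in Ioo (0:ℝ) 1, s ^ (k-2) * (g s - g0)^2 = L.toReal := by
    rw [hL, integral_eq_lintegral_of_nonneg_ae]
    · filter_upwards [ae_restrict_mem measurableSet_Ioo] with s hs
      exact mul_nonneg (Real.rpow_nonneg hs.1.le _) (sq_nonneg _)
    · exact ((hrpm (k-2)).aemeasurable.mul
        ((hgm.sub aemeasurable_const).pow_const 2)).aestronglyMeasurable
  have hfin : L ≤ ENNReal.ofReal ((4/(1-k)^2) * R) := by
    rw [ENNReal.ofReal_mul (by positivity)]
    exact hAR ▸ step3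
  rw [hLHS]
  calc L.toReal ≤ (ENNReal.ofReal ((4/(1-k)^2) * R)).toReal :=
        ENNReal.toReal_mono ENNReal.ofReal_ne_top hfin
    _ = (4/(1-k)^2) * R := ENNReal.toReal_ofReal (by positivity)
end

section
/- Let α > 0 and let η : ℝ³ → ℝ³ be a C² map such that the Jacobian matrix Dη(x) is invertible with J(x) = det Dη(x) > 0 for every x; set A(x) = (Dη(x))⁻¹. Then for all l, k, i ∈ {1,2,3} and every x: ∂_l ( A^k_i J^{−1/α} ) = −(1 + 1/α) J^{−1/α} A^k_i · Σ_{r,s} A^s_r ∂_l ∂_s η^r + J^{−1/α} Σ_{r,s} ( A^k_i A^s_r − A^k_r A^s_i ) ∂_l ∂_s η^r. -/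
/-- The Jacobian matrix `Dη(x) = (∂_j η^i(x))_{i j}` of a map `η : ℝ³ → ℝ³`. -/
noncomputable def Dmat (η : (Fin 3 → ℝ) → (Fin 3 → ℝ)) (x : Fin 3 → ℝ) :
    Matrix (Fin 3) (Fin 3) ℝ :=
  Matrix.of fun i j => fderiv ℝ η x (Pi.single j 1) i

attribute [local instance] Matrix.linftyOpNormedRing Matrix.linftyOpNormedAlgebra

noncomputable def entryCLM (k i : Fin 3) : Matrix (Fin 3) (Fin 3) ℝ →L[ℝ] ℝ :=
  LinearMap.toContinuousLinearMap
    { toFun := fun N => N k i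
      map_add' := fun _ _ => rfl
      map_smul' := fun _ _ => rfl }

set_option maxHeartbeats 2000000

/-- First-order structure identity (3.17) isolating the divergence part:
for `η : ℝ³ → ℝ³` of class `C²` with `J = det Dη > 0` and `A = (Dη)⁻¹`,
`∂_l (A^k_i J^{-1/α}) = -(1+1/α) J^{-1/α} A^k_i Σ_{r,s} A^s_r ∂_l∂_s η^r
  + J^{-1/α} Σ_{r,s} (A^k_i A^s_r - A^k_r A^s_i) ∂_l∂_s η^r`. -/
theorem structure_identity_first_order (α : ℝ) (hα : 0 < α)
    (η : (Fin 3 → ℝ) → (Fin 3 → ℝ)) (hη : ContDiff ℝ 2 η)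
    (hJ : ∀ x, 0 < (Dmat η x).det) :
    ∀ l k i : Fin 3, ∀ x : Fin 3 → ℝ,
      fderiv ℝ (fun y => (Dmat η y)⁻¹ k i * (Dmat η y).det ^ (-(1/α))) x (Pi.single l 1) =
        -(1 + 1/α) * (Dmat η x).det ^ (-(1/α)) * (Dmat η x)⁻¹ k i *
            (∑ r : Fin 3, ∑ s : Fin 3, (Dmat η x)⁻¹ s r *
              fderiv ℝ (fun y => fderiv ℝ η y (Pi.single s 1) r) x (Pi.single l 1))
          + (Dmat η x).det ^ (-(1/α)) *
            ∑ r : Fin 3, ∑ s : Fin 3,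
              ((Dmat η x)⁻¹ k i * (Dmat η x)⁻¹ s r - (Dmat η x)⁻¹ k r * (Dmat η x)⁻¹ s i) *
                fderiv ℝ (fun y => fderiv ℝ η y (Pi.single s 1) r) x (Pi.single l 1) := by
  intro l k i x
  -- differentiability of the entries of the Jacobian
  have hC1 : ContDiff ℝ 1 (fderiv ℝ η) := by
    have h2 : ContDiff ℝ ((1 : ℕ) + 1) η := by norm_num at hη ⊢; exact hη
    exact (contDiff_succ_iff_fderiv.mp h2).2.2
  have hfd : Differentiable ℝ (fderiv ℝ η) := hC1.differentiable one_ne_zero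
  have hdiff : ∀ r s : Fin 3, DifferentiableAt ℝ (fun y => fderiv ℝ η y (Pi.single s 1) r) x := by
    intro r s
    exact (((ContinuousLinearMap.proj (R := ℝ) (φ := fun _ : Fin 3 => ℝ) r).comp
      ((ContinuousLinearMap.apply ℝ (Fin 3 → ℝ)) (Pi.single s 1))).differentiable.comp hfd).differentiableAt
  set D : Fin 3 → Fin 3 → ((Fin 3 → ℝ) →L[ℝ] ℝ) :=
    fun r s => fderiv ℝ (fun y => fderiv ℝ η y (Pi.single s 1) r) x with hD_def
  have hD : ∀ r s : Fin 3, HasFDerivAt (fun y => fderiv ℝ η y (Pi.single s 1) r) (D r s) x :=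
    fun r s => (hdiff r s).hasFDerivAt
  -- derivative of the matrix-valued map
  set E' : (Fin 3 → ℝ) →L[ℝ] Matrix (Fin 3) (Fin 3) ℝ :=
    ∑ r : Fin 3, ∑ s : Fin 3, (D r s).smulRight (Matrix.single r s 1) with hE'_def
  have hE : HasFDerivAt (fun y => Dmat η y) E' x := by
    have hfun : (fun y => Dmat η y) = fun y => ∑ r : Fin 3, ∑ s : Fin 3,
        (fderiv ℝ η y (Pi.single s 1) r) • Matrix.single r s (1 : ℝ) := by
      funext y
      ext a b
      simp [Dmat, Matrix.sum_apply, Matrix.single, Fin.sum_univ_three]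
      fin_cases a <;> fin_cases b <;> simp
    rw [hfun]
    exact HasFDerivAt.fun_sum fun r _ => HasFDerivAt.fun_sum fun s _ => (hD r s).smul_const (Matrix.single r s (1 : ℝ))
  -- derivative of the inverse
  have hu : IsUnit (Dmat η x) := (Matrix.isUnit_iff_isUnit_det _).mpr
    (isUnit_iff_ne_zero.mpr (hJ x).ne')
  have hinvmap : HasFDerivAt (fun y => (Dmat η y)⁻¹)
      ((-(ContinuousLinearMap.mulLeftRight ℝ _ ((Dmat η x)⁻¹) ((Dmat η x)⁻¹))).comp E') x := by
    have h1 := hasFDerivAt_ringInverse (𝕜 := ℝ) hu.unit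
    rw [hu.unit_spec] at h1
    have h2 := h1.comp x hE
    have h3 : (↑hu.unit⁻¹ : Matrix (Fin 3) (Fin 3) ℝ) = (Dmat η x)⁻¹ := by
      rw [Matrix.coe_units_inv, hu.unit_spec]
    rw [h3] at h2
    have h4 : (fun y => (Dmat η y)⁻¹) = Ring.inverse ∘ (fun y => Dmat η y) := by
      funext y; simp [Matrix.nonsing_inv_eq_ringInverse]
    rw [h4]
    exact h2
  have ha : HasFDerivAt (fun y => (Dmat η y)⁻¹ k i)
      ((entryCLM k i).comp
        ((-(ContinuousLinearMap.mulLeftRight ℝ _ ((Dmat η x)⁻¹) ((Dmat η x)⁻¹))).comp E')) x :=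
    (entryCLM k i).hasFDerivAt.comp x hinvmap
  -- derivative of the determinant
  have hdet : HasFDerivAt (fun y => (Dmat η y).det)
      (∑ r : Fin 3, ∑ s : Fin 3, (Dmat η x).adjugate s r • D r s) x := by
    have hfun : (fun y => (Dmat η y).det) = fun y =>
        fderiv ℝ η y (Pi.single 0 1) 0 * fderiv ℝ η y (Pi.single 1 1) 1 * fderiv ℝ η y (Pi.single 2 1) 2
        - fderiv ℝ η y (Pi.single 0 1) 0 * fderiv ℝ η y (Pi.single 1 1) 2 * fderiv ℝ η y (Pi.single 2 1) 1
        - fderiv ℝ η y (Pi.single 1 1) 0 * fderiv ℝ η y (Pi.single 0 1) 1 * fderiv ℝ η y (Pi.single 2 1) 2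
        + (fderiv ℝ η y (Pi.single 1 1) 0 * fderiv ℝ η y (Pi.single 2 1) 1 * fderiv ℝ η y (Pi.single 0 1) 2
        + fderiv ℝ η y (Pi.single 2 1) 0 * fderiv ℝ η y (Pi.single 0 1) 1 * fderiv ℝ η y (Pi.single 1 1) 2)
        - fderiv ℝ η y (Pi.single 2 1) 0 * fderiv ℝ η y (Pi.single 1 1) 1 * fderiv ℝ η y (Pi.single 0 1) 2 := by
      funext y
      rw [Matrix.det_fin_three]
      simp only [Dmat, Matrix.of_apply]
      ring
    rw [hfun]
    have H := ((((((hD 0 0).mul (hD 1 1)).mul (hD 2 2)).sub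
        (((hD 0 0).mul (hD 2 1)).mul (hD 1 2))).sub
        (((hD 0 1).mul (hD 1 0)).mul (hD 2 2))).add
        ((((hD 0 1).mul (hD 1 2)).mul (hD 2 0)).add
        (((hD 0 2).mul (hD 1 0)).mul (hD 2 1)))).sub
        (((hD 0 2).mul (hD 1 1)).mul (hD 2 0))
    refine H.congr_fderiv ?_
    ext v
    simp [Fin.sum_univ_three, Matrix.adjugate_fin_three, Dmat, Matrix.of_apply]
    ring
  -- derivative of J^(-(1/α))
  have hp : HasFDerivAt (fun y => (Dmat η y).det ^ (-(1/α)))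
      ((-(1/α) * (Dmat η x).det ^ (-(1/α) - 1)) •
        (∑ r : Fin 3, ∑ s : Fin 3, (Dmat η x).adjugate s r • D r s)) x :=
    hdet.rpow_const (Or.inl (hJ x).ne')
  have hf : HasFDerivAt (fun y => (Dmat η y)⁻¹ k i * (Dmat η y).det ^ (-(1/α))) _ x := ha.mul hp
  rw [hf.fderiv]
  simp only [ContinuousLinearMap.add_apply, ContinuousLinearMap.coe_smul', Pi.smul_apply,
    ContinuousLinearMap.coe_comp', ContinuousLinearMap.comp_apply, Function.comp_apply, ContinuousLinearMap.coe_sum',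
    Finset.sum_apply, ContinuousLinearMap.smulRight_apply, ContinuousLinearMap.neg_apply,
    ContinuousLinearMap.mulLeftRight_apply, smul_eq_mul, Fin.sum_univ_three]
  have hentry : ∀ N : Matrix (Fin 3) (Fin 3) ℝ, entryCLM k i N = N k i := fun _ => rfl
  have hadj : ∀ a b : Fin 3, (Dmat η x).adjugate a b = (Dmat η x).det * (Dmat η x)⁻¹ a b := by
    intro a b
    have h : (Dmat η x)⁻¹ a b = ((Dmat η x).det)⁻¹ * (Dmat η x).adjugate a b := by
      rw [Matrix.inv_def, Matrix.smul_apply, Ring.inverse_eq_inv, smul_eq_mul]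
    rw [h, ← mul_assoc, mul_inv_cancel₀ (hJ x).ne', one_mul]
  have hE'v : ∀ a b : Fin 3, (E' (Pi.single l 1)) a b = (D a b) (Pi.single l 1) := by
    intro a b
    rw [hE'_def]
    simp only [ContinuousLinearMap.sum_apply, ContinuousLinearMap.smulRight_apply,
      Matrix.sum_apply, Matrix.smul_apply, smul_eq_mul]
    fin_cases a <;> fin_cases b <;>
      simp [Fin.sum_univ_three, Matrix.single, Matrix.of_apply]
  have hmulent : (entryCLM k i) (-((Dmat η x)⁻¹ * E' (Pi.single l 1) * (Dmat η x)⁻¹)) =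
      -(∑ r : Fin 3, ∑ s : Fin 3,
        (Dmat η x)⁻¹ k r * (D r s) (Pi.single l 1) * (Dmat η x)⁻¹ s i) := by
    rw [hentry, Matrix.neg_apply]
    congr 1
    simp only [Matrix.mul_apply, Fin.sum_univ_three, hE'v]
    ring
  change _ + _ * (entryCLM k i) (-((Dmat η x)⁻¹ * E' (Pi.single l 1) * (Dmat η x)⁻¹)) = _
  rw [hmulent]
  simp only [hadj, hD_def, Fin.sum_univ_three, Real.rpow_sub (hJ x), Real.rpow_one]
  have hJne : (Dmat η x).det ≠ 0 := (hJ x).ne'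
  field_simp
  ring
end

section
/- Let α > 0 and let η : ℝ³ → ℝ³ be a C³ map such that the Jacobian matrix Dη(x) is invertible with J(x) = det Dη(x) > 0 for every x; set A(x) = (Dη(x))⁻¹. Then for all l, i ∈ {1,2,3} and every x: Σ_k ∂_l ∂_k ( A^k_i J^{−1/α} ) = −(1 + 1/α) Σ_k ∂_k ( J^{−1/α} A^k_i Σ_{r,s} A^s_r ∂_l ∂_s η^r ) + Σ_{k,r,s} ∂_k ( J^{−1/α} ( A^k_i A^s_r − A^k_r A^s_i ) ) ∂_l ∂_s η^r. -/
open Matrix Finset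

namespace StructAux

/-- entry function of the Jacobian matrix -/
noncomputable def df (η : (Fin 3 → ℝ) → (Fin 3 → ℝ)) (r s : Fin 3) (y : Fin 3 → ℝ) : ℝ :=
  fderiv ℝ η y (Pi.single s 1) r

lemma Dmat_apply (η : (Fin 3 → ℝ) → (Fin 3 → ℝ)) (y : Fin 3 → ℝ) (r s : Fin 3) :
    Dmat η y r s = df η r s y := rfl

/-- applied product rule -/
lemma fderiv_mul_apply' {f g : (Fin 3 → ℝ) → ℝ} {x v : Fin 3 → ℝ}
    (hf : DifferentiableAt ℝ f x) (hg : DifferentiableAt ℝ g x) :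
    fderiv ℝ (fun y => f y * g y) x v =
      fderiv ℝ f x v * g x + f x * fderiv ℝ g x v := by
  rw [fderiv_fun_mul hf hg]
  simp [ContinuousLinearMap.add_apply, ContinuousLinearMap.smul_apply]
  ring

lemma fderiv_sub_apply' {f g : (Fin 3 → ℝ) → ℝ} {x v : Fin 3 → ℝ}
    (hf : DifferentiableAt ℝ f x) (hg : DifferentiableAt ℝ g x) :
    fderiv ℝ (fun y => f y - g y) x v = fderiv ℝ f x v - fderiv ℝ g x v := by
  rw [fderiv_fun_sub hf hg]; simp

lemma fderiv_add_apply' {f g : (Fin 3 → ℝ) → ℝ} {x v : Fin 3 → ℝ}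
    (hf : DifferentiableAt ℝ f x) (hg : DifferentiableAt ℝ g x) :
    fderiv ℝ (fun y => f y + g y) x v = fderiv ℝ f x v + fderiv ℝ g x v := by
  rw [fderiv_fun_add hf hg]; simp

lemma fderiv_const_mul_apply' {f : (Fin 3 → ℝ) → ℝ} {x v : Fin 3 → ℝ}
    (hf : DifferentiableAt ℝ f x) (c : ℝ) :
    fderiv ℝ (fun y => c * f y) x v = c * fderiv ℝ f x v := by
  rw [fderiv_const_mul hf]; simp

lemma fderiv_sum_apply' {f : Fin 3 → (Fin 3 → ℝ) → ℝ} {x v : Fin 3 → ℝ}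
    (hf : ∀ j, DifferentiableAt ℝ (f j) x) :
    fderiv ℝ (fun y => ∑ j, f j y) x v = ∑ j, fderiv ℝ (f j) x v := by
  rw [fderiv_fun_sum (fun j _ => hf j)]; simp

variable {η : (Fin 3 → ℝ) → (Fin 3 → ℝ)}

lemma hdf (hη : ContDiff ℝ 3 η) (r s : Fin 3) : ContDiff ℝ 2 (df η r s) := by
  have h1 : ContDiff ℝ 2 (fderiv ℝ η) := hη.fderiv_right (by norm_num)
  have h2 : ContDiff ℝ 2 (fun y => fderiv ℝ η y (Pi.single s 1)) :=
    h1.clm_apply contDiff_const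
  exact (contDiff_pi.mp h2) r

lemma det_expand (y : Fin 3 → ℝ) :
    (Dmat η y).det =
      df η 0 0 y * df η 1 1 y * df η 2 2 y - df η 0 0 y * df η 1 2 y * df η 2 1 y -
        df η 0 1 y * df η 1 0 y * df η 2 2 y + df η 0 1 y * df η 1 2 y * df η 2 0 y +
        df η 0 2 y * df η 1 0 y * df η 2 1 y - df η 0 2 y * df η 1 1 y * df η 2 0 y :=
  Matrix.det_fin_three _

lemma hJ2 (hη : ContDiff ℝ 3 η) : ContDiff ℝ 2 (fun y => (Dmat η y).det) := by
  have : (fun y => (Dmat η y).det) = fun y =>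
      df η 0 0 y * df η 1 1 y * df η 2 2 y - df η 0 0 y * df η 1 2 y * df η 2 1 y -
        df η 0 1 y * df η 1 0 y * df η 2 2 y + df η 0 1 y * df η 1 2 y * df η 2 0 y +
        df η 0 2 y * df η 1 0 y * df η 2 1 y - df η 0 2 y * df η 1 1 y * df η 2 0 y :=
    funext fun y => det_expand y
  rw [this]
  have h00 := hdf hη 0 0; have h01 := hdf hη 0 1; have h02 := hdf hη 0 2
  have h10 := hdf hη 1 0; have h11 := hdf hη 1 1; have h12 := hdf hη 1 2
  have h20 := hdf hη 2 0; have h21 := hdf hη 2 1; have h22 := hdf hη 2 2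
  fun_prop


lemma inv_apply' (M : Matrix (Fin 3) (Fin 3) ℝ) (k i : Fin 3) :
    M⁻¹ k i = (M.det)⁻¹ * M.adjugate k i := by
  rw [Matrix.inv_def, Matrix.smul_apply, Ring.inverse_eq_inv', smul_eq_mul]

lemma hadj (hη : ContDiff ℝ 3 η) (k i : Fin 3) :
    ContDiff ℝ 2 (fun y => (Dmat η y).adjugate k i) := by
  have h00 := hdf hη 0 0; have h01 := hdf hη 0 1; have h02 := hdf hη 0 2
  have h10 := hdf hη 1 0; have h11 := hdf hη 1 1; have h12 := hdf hη 1 2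
  have h20 := hdf hη 2 0; have h21 := hdf hη 2 1; have h22 := hdf hη 2 2
  fin_cases k <;> fin_cases i <;>
    simp [Matrix.adjugate_fin_three, Dmat_apply] <;>
    fun_prop

lemma hAf (hη : ContDiff ℝ 3 η) (hJ : ∀ x, 0 < (Dmat η x).det) (k i : Fin 3) :
    ContDiff ℝ 2 (fun y => (Dmat η y)⁻¹ k i) := by
  have : (fun y => (Dmat η y)⁻¹ k i) =
      fun y => ((Dmat η y).det)⁻¹ * (Dmat η y).adjugate k i :=
    funext fun y => inv_apply' _ k i
  rw [this]
  exact ((hJ2 hη).inv (fun y => (hJ y).ne')).mul (hadj hη k i)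

lemma hJpow (hη : ContDiff ℝ 3 η) (hJ : ∀ x, 0 < (Dmat η x).det) (c : ℝ) (y : Fin 3 → ℝ) :
    ContDiffAt ℝ 2 (fun y => (Dmat η y).det ^ c) y :=
  by have := (Real.contDiffAt_rpow_const_of_ne (p := c) (hJ y).ne').comp y (hJ2 hη).contDiffAt; exact this

lemma hH (hη : ContDiff ℝ 3 η) (r s : Fin 3) (v : Fin 3 → ℝ) :
    ContDiff ℝ 1 (fun y => fderiv ℝ (df η r s) y v) :=
  (((hdf hη r s).fderiv_right (by norm_num)).clm_apply contDiff_const)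

lemma schwarz_applied {f : (Fin 3 → ℝ) → ℝ} {x : Fin 3 → ℝ}
    (hf : ContDiffAt ℝ 2 f x) (v w : Fin 3 → ℝ) :
    fderiv ℝ (fun y => fderiv ℝ f y v) x w = fderiv ℝ (fun y => fderiv ℝ f y w) x v := by
  have hd : DifferentiableAt ℝ (fderiv ℝ f) x :=
    (hf.fderiv_right (m := 1) (by norm_num)).differentiableAt (by norm_num)
  have h1 : ∀ u : Fin 3 → ℝ, fderiv ℝ (fun y => fderiv ℝ f y u) x =
      (fderiv ℝ (fderiv ℝ f) x).flip u := by
    intro u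
    rw [fderiv_clm_apply hd (differentiableAt_const u)]
    simp
  rw [h1 v, h1 w]
  simp only [ContinuousLinearMap.flip_apply]
  exact (hf.isSymmSndFDerivAt (by norm_num)) w v


section
variable (hη : ContDiff ℝ 3 η) (hJ : ∀ x, 0 < (Dmat η x).det)
include hη

lemma Ddf (r s : Fin 3) : Differentiable ℝ (df η r s) :=
  (hdf hη r s).differentiable (by norm_num)

lemma DJ : Differentiable ℝ (fun y => (Dmat η y).det) :=
  (hJ2 hη).differentiable (by norm_num)

lemma DH (r s : Fin 3) (v : Fin 3 → ℝ) :
    Differentiable ℝ (fun y => fderiv ℝ (df η r s) y v) :=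
  (hH hη r s v).differentiable (by norm_num)

include hJ in
lemma DA (k i : Fin 3) : Differentiable ℝ (fun y => (Dmat η y)⁻¹ k i) :=
  (hAf hη hJ k i).differentiable (by norm_num)

include hJ in
lemma DJpow (c : ℝ) : Differentiable ℝ (fun y => (Dmat η y).det ^ c) := fun y =>
  ((hJpow hη hJ c y).differentiableAt (by norm_num))

lemma jacobi (y v : Fin 3 → ℝ) :
    fderiv ℝ (fun z => (Dmat η z).det) y v =
      ∑ r, ∑ s, (Dmat η y).adjugate s r * fderiv ℝ (df η r s) y v := by
  have h00 := Ddf hη 0 0; have h01 := Ddf hη 0 1; have h02 := Ddf hη 0 2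
  have h10 := Ddf hη 1 0; have h11 := Ddf hη 1 1; have h12 := Ddf hη 1 2
  have h20 := Ddf hη 2 0; have h21 := Ddf hη 2 1; have h22 := Ddf hη 2 2
  have hfun : (fun z => (Dmat η z).det) = fun z =>
      df η 0 0 z * df η 1 1 z * df η 2 2 z - df η 0 0 z * df η 1 2 z * df η 2 1 z -
        df η 0 1 z * df η 1 0 z * df η 2 2 z + df η 0 1 z * df η 1 2 z * df η 2 0 z +
        df η 0 2 z * df η 1 0 z * df η 2 1 z - df η 0 2 z * df η 1 1 z * df η 2 0 z :=
    funext fun z => det_expand z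
  rw [hfun]
  simp (disch := fun_prop) only [fderiv_sub_apply', fderiv_add_apply', fderiv_mul_apply']
  simp [Fin.sum_univ_three, Matrix.adjugate_fin_three, Dmat_apply]
  ring


include hJ in
lemma fderiv_inv_entry (y v : Fin 3 → ℝ) (k m : Fin 3) :
    fderiv ℝ (fun z => (Dmat η z)⁻¹ k m) y v =
      -∑ r, ∑ s, (Dmat η y)⁻¹ k r * fderiv ℝ (df η r s) y v * (Dmat η y)⁻¹ s m := by
  have hunit : ∀ z, IsUnit (Dmat η z).det := fun z => isUnit_iff_ne_zero.mpr (hJ z).ne'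
  have hAdiff : ∀ j, Differentiable ℝ (fun z => (Dmat η z)⁻¹ k j) := fun j => DA hη hJ k j
  have hddiff : ∀ r s, Differentiable ℝ (df η r s) := Ddf hη
  -- the product A * D is constant, equal to the identity matrix
  have hc : ∀ i : Fin 3, (fun z => ∑ j, (Dmat η z)⁻¹ k j * df η j i z) =
      fun _ => (1 : Matrix (Fin 3) (Fin 3) ℝ) k i := by
    intro i
    funext z
    rw [show ∑ j, (Dmat η z)⁻¹ k j * df η j i z = ((Dmat η z)⁻¹ * Dmat η z) k i from
      (Matrix.mul_apply).symm, Matrix.nonsing_inv_mul _ (hunit z)]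
  have eq1 : ∀ i : Fin 3,
      ∑ j, (fderiv ℝ (fun z => (Dmat η z)⁻¹ k j) y v * df η j i y
        + (Dmat η y)⁻¹ k j * fderiv ℝ (df η j i) y v) = 0 := by
    intro i
    have h0 : fderiv ℝ (fun z => ∑ j, (Dmat η z)⁻¹ k j * df η j i z) y v = 0 := by
      rw [hc i]; simp
    rw [← h0]
    rw [fderiv_sum_apply' (fun j => ((hAdiff j) y).fun_mul ((hddiff j i) y))]
    exact Finset.sum_congr rfl fun j _ =>
      (fderiv_mul_apply' ((hAdiff j) y) ((hddiff j i) y)).symm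
  -- (D * A) entry
  have hDA : ∀ j : Fin 3, ∑ i, df η j i y * (Dmat η y)⁻¹ i m =
      (1 : Matrix (Fin 3) (Fin 3) ℝ) j m := fun j => by
    have hr : ∑ i, df η j i y * (Dmat η y)⁻¹ i m = ∑ i, Dmat η y j i * (Dmat η y)⁻¹ i m := rfl
    rw [hr, ← Matrix.mul_apply, Matrix.mul_nonsing_inv _ (hunit y)]
  calc fderiv ℝ (fun z => (Dmat η z)⁻¹ k m) y v
      = ∑ j, fderiv ℝ (fun z => (Dmat η z)⁻¹ k j) y v * (1 : Matrix (Fin 3) (Fin 3) ℝ) j m := by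
        simp [Matrix.one_apply, mul_ite, mul_one, mul_zero]
    _ = ∑ j, ∑ i, fderiv ℝ (fun z => (Dmat η z)⁻¹ k j) y v *
          (df η j i y * (Dmat η y)⁻¹ i m) := by
        refine Finset.sum_congr rfl fun j _ => ?_
        rw [← hDA j, Finset.mul_sum]
    _ = ∑ i, (∑ j, (fderiv ℝ (fun z => (Dmat η z)⁻¹ k j) y v * df η j i y
          + (Dmat η y)⁻¹ k j * fderiv ℝ (df η j i) y v)) * (Dmat η y)⁻¹ i m
        - ∑ i, ∑ j, (Dmat η y)⁻¹ k j * fderiv ℝ (df η j i) y v * (Dmat η y)⁻¹ i m := by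
        rw [Finset.sum_comm]
        rw [← Finset.sum_sub_distrib]
        refine Finset.sum_congr rfl fun i _ => ?_
        rw [Finset.sum_mul]
        rw [← Finset.sum_sub_distrib]
        refine Finset.sum_congr rfl fun j _ => ?_
        ring
    _ = -∑ i, ∑ j, (Dmat η y)⁻¹ k j * fderiv ℝ (df η j i) y v * (Dmat η y)⁻¹ i m := by
        simp only [eq1, zero_mul, Finset.sum_const_zero, zero_sub]
    _ = -∑ r, ∑ s, (Dmat η y)⁻¹ k r * fderiv ℝ (df η r s) y v * (Dmat η y)⁻¹ s m := by
        rw [Finset.sum_comm]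

include hJ in
lemma fderiv_Jpow (c : ℝ) (y v : Fin 3 → ℝ) :
    fderiv ℝ (fun z => (Dmat η z).det ^ c) y v =
      c * (Dmat η y).det ^ c *
        ∑ r, ∑ s, (Dmat η y)⁻¹ s r * fderiv ℝ (df η r s) y v := by
  have hJy : (0:ℝ) < (Dmat η y).det := hJ y
  have h1 : HasDerivAt (fun t : ℝ => t ^ c) (c * (Dmat η y).det ^ (c - 1)) ((Dmat η y).det) :=
    Real.hasDerivAt_rpow_const (Or.inl hJy.ne')
  have h2 : HasFDerivAt (fun z => (Dmat η z).det) (fderiv ℝ (fun z => (Dmat η z).det) y) y :=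
    (DJ hη y).hasFDerivAt
  have h3 := (h1.comp_hasFDerivAt y h2).fderiv
  have h4 : (fun z => (Dmat η z).det ^ c) =
      (fun t : ℝ => t ^ c) ∘ (fun z => (Dmat η z).det) := rfl
  rw [h4, h3]
  simp only [ContinuousLinearMap.smul_apply, smul_eq_mul]
  rw [jacobi hη]
  have hadjA : ∀ s r : Fin 3, (Dmat η y).adjugate s r = (Dmat η y).det * (Dmat η y)⁻¹ s r := by
    intro s r
    rw [inv_apply']
    field_simp
  have hexp : (Dmat η y).det ^ (c - 1) = (Dmat η y).det ^ c / (Dmat η y).det := by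
    rw [Real.rpow_sub hJy, Real.rpow_one]
  simp only [hadjA, hexp]
  have hfac : ∑ r, ∑ s, (Dmat η y).det * (Dmat η y)⁻¹ s r * fderiv ℝ (df η r s) y v =
      (Dmat η y).det * ∑ r, ∑ s, (Dmat η y)⁻¹ s r * fderiv ℝ (df η r s) y v := by
    simp [Finset.mul_sum, mul_assoc]
  rw [hfac]
  field_simp


include hJ in
lemma key1 (α : ℝ) (l i k : Fin 3) (y : Fin 3 → ℝ) :
    fderiv ℝ (fun z => (Dmat η z)⁻¹ k i * (Dmat η z).det ^ (-(1/α))) y (Pi.single l 1) =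
      -(1 + 1/α) * ((Dmat η y).det ^ (-(1/α)) * (Dmat η y)⁻¹ k i *
          ∑ r, ∑ s, (Dmat η y)⁻¹ s r * fderiv ℝ (df η r s) y (Pi.single l 1))
        + ∑ r, ∑ s, ((Dmat η y).det ^ (-(1/α)) *
            ((Dmat η y)⁻¹ k i * (Dmat η y)⁻¹ s r - (Dmat η y)⁻¹ k r * (Dmat η y)⁻¹ s i)) *
            fderiv ℝ (df η r s) y (Pi.single l 1) := by
  rw [fderiv_mul_apply' (DA hη hJ k i y) (DJpow hη hJ (-(1/α)) y)]
  rw [fderiv_inv_entry hη hJ, fderiv_Jpow hη hJ]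
  simp only [Fin.sum_univ_three]
  ring


lemma hdf_eq (r s : Fin 3) :
    df η r s = fun y => fderiv ℝ (fun w => η w r) y (Pi.single s 1) := by
  funext y
  have hcomp : (fun w => η w r) = (ContinuousLinearMap.proj (R := ℝ)
      (φ := fun _ : Fin 3 => ℝ) r) ∘ η := rfl
  have h := ((ContinuousLinearMap.proj (R := ℝ) (φ := fun _ : Fin 3 => ℝ) r).hasFDerivAt.comp y
    ((hη.differentiable (by norm_num) y).hasFDerivAt)).fderiv
  rw [hcomp, h]
  rfl

lemma swap_inner (r s l' : Fin 3) (y : Fin 3 → ℝ) :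
    fderiv ℝ (df η r s) y (Pi.single l' 1) = fderiv ℝ (df η r l') y (Pi.single s 1) := by
  rw [hdf_eq hη r s, hdf_eq hη r l']
  exact schwarz_applied ((contDiff_pi.mp hη r).of_le (by norm_num)).contDiffAt _ _

lemma Tsym (l : Fin 3) (x : Fin 3 → ℝ) (k r s : Fin 3) :
    fderiv ℝ (fun y => fderiv ℝ (df η r s) y (Pi.single l 1)) x (Pi.single k 1) =
      fderiv ℝ (fun y => fderiv ℝ (df η r k) y (Pi.single l 1)) x (Pi.single s 1) := by
  have h1 : (fun y => fderiv ℝ (df η r s) y (Pi.single l 1)) =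
      fun y => fderiv ℝ (df η r l) y (Pi.single s 1) := funext fun y => swap_inner hη r s l y
  have h2 : (fun y => fderiv ℝ (df η r k) y (Pi.single l 1)) =
      fun y => fderiv ℝ (df η r l) y (Pi.single k 1) := funext fun y => swap_inner hη r k l y
  rw [h1, h2]
  exact schwarz_applied (hdf hη r l).contDiffAt _ _

end

lemma sum_cancel (Q T : Fin 3 → Fin 3 → Fin 3 → ℝ)
    (hQ : ∀ k r s, Q s r k = - Q k r s) (hT : ∀ k r s, T s r k = T k r s) :
    ∑ k, ∑ r, ∑ s, Q k r s * T k r s = 0 := by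
  have h : ∑ k, ∑ r, ∑ s, Q k r s * T k r s = ∑ k, ∑ r, ∑ s, Q s r k * T s r k :=
    calc ∑ k, ∑ r, ∑ s, Q k r s * T k r s
        = ∑ r, ∑ k, ∑ s, Q k r s * T k r s := Finset.sum_comm
      _ = ∑ r, ∑ s, ∑ k, Q k r s * T k r s :=
          Finset.sum_congr rfl fun r _ => Finset.sum_comm
      _ = ∑ s, ∑ r, ∑ k, Q k r s * T k r s := Finset.sum_comm
  have h2 : ∑ k, ∑ r, ∑ s, Q s r k * T s r k =
      -∑ k, ∑ r, ∑ s, Q k r s * T k r s := by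
    simp only [← Finset.sum_neg_distrib]
    exact Finset.sum_congr rfl fun k _ => Finset.sum_congr rfl fun r _ =>
      Finset.sum_congr rfl fun s _ => by rw [hQ, hT]; ring
  rw [h2] at h
  linarith

end StructAux

open StructAux in
/-- Second-order structure identity (3.18): for `η : ℝ³ → ℝ³` of class `C³` with
`J = det Dη > 0` and `A = (Dη)⁻¹`,
`Σ_k ∂_l∂_k (A^k_i J^{-1/α}) = -(1+1/α) Σ_k ∂_k (J^{-1/α} A^k_i Σ_{r,s} A^s_r ∂_l∂_s η^r)
  + Σ_{k,r,s} ∂_k (J^{-1/α} (A^k_i A^s_r - A^k_r A^s_i)) ∂_l∂_s η^r`. -/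
theorem structure_identity_second_order (α : ℝ) (hα : 0 < α)
    (η : (Fin 3 → ℝ) → (Fin 3 → ℝ)) (hη : ContDiff ℝ 3 η)
    (hJ : ∀ x, 0 < (Dmat η x).det) :
    ∀ l i : Fin 3, ∀ x : Fin 3 → ℝ,
      ∑ k : Fin 3,
        fderiv ℝ (fun y =>
            fderiv ℝ (fun z => (Dmat η z)⁻¹ k i * (Dmat η z).det ^ (-(1/α)))
              y (Pi.single k 1))
          x (Pi.single l 1) =
      -(1 + 1/α) *
          ∑ k : Fin 3,
            fderiv ℝ (fun y => (Dmat η y).det ^ (-(1/α)) * (Dmat η y)⁻¹ k i *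
                ∑ r : Fin 3, ∑ s : Fin 3, (Dmat η y)⁻¹ s r *
                  fderiv ℝ (fun z => fderiv ℝ η z (Pi.single s 1) r) y (Pi.single l 1))
              x (Pi.single k 1)
        + ∑ k : Fin 3, ∑ r : Fin 3, ∑ s : Fin 3,
            fderiv ℝ (fun y => (Dmat η y).det ^ (-(1/α)) *
                ((Dmat η y)⁻¹ k i * (Dmat η y)⁻¹ s r - (Dmat η y)⁻¹ k r * (Dmat η y)⁻¹ s i))
              x (Pi.single k 1) *
            fderiv ℝ (fun z => fderiv ℝ η z (Pi.single s 1) r) x (Pi.single l 1) := by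
  intro l i x
  have df_eq : ∀ r s : Fin 3, (fun z => fderiv ℝ η z (Pi.single s 1) r) = df η r s :=
    fun r s => rfl
  simp only [df_eq]
  have hDA' := DA hη hJ
  have hDH' := DH hη
  have hDJp := DJpow hη hJ (-(1/α))
  have hsum : DifferentiableAt ℝ (fun y => ∑ r, ∑ s, (Dmat η y)⁻¹ s r *
      fderiv ℝ (df η r s) y (Pi.single l 1)) x :=
    DifferentiableAt.fun_sum fun r _ => DifferentiableAt.fun_sum fun s _ =>
      ((hDA' s r) x).fun_mul ((hDH' r s _) x)
  have hstep : ∀ k : Fin 3,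
      fderiv ℝ (fun y => fderiv ℝ (fun z => (Dmat η z)⁻¹ k i * (Dmat η z).det ^ (-(1/α)))
          y (Pi.single k 1)) x (Pi.single l 1)
      = -(1 + 1/α) * fderiv ℝ (fun y => (Dmat η y).det ^ (-(1/α)) * (Dmat η y)⁻¹ k i *
            ∑ r, ∑ s, (Dmat η y)⁻¹ s r * fderiv ℝ (df η r s) y (Pi.single l 1))
            x (Pi.single k 1)
        + ∑ r, ∑ s,
            (fderiv ℝ (fun y => (Dmat η y).det ^ (-(1/α)) *
                ((Dmat η y)⁻¹ k i * (Dmat η y)⁻¹ s r - (Dmat η y)⁻¹ k r * (Dmat η y)⁻¹ s i))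
              x (Pi.single k 1) * fderiv ℝ (df η r s) x (Pi.single l 1)
            + ((Dmat η x).det ^ (-(1/α)) *
                ((Dmat η x)⁻¹ k i * (Dmat η x)⁻¹ s r - (Dmat η x)⁻¹ k r * (Dmat η x)⁻¹ s i)) *
              fderiv ℝ (fun y => fderiv ℝ (df η r s) y (Pi.single l 1)) x (Pi.single k 1)) := by
    intro k
    rw [schwarz_applied (((hAf hη hJ k i).contDiffAt).mul (hJpow hη hJ (-(1/α)) x)) _ _]
    have hfun : (fun y => fderiv ℝ (fun z => (Dmat η z)⁻¹ k i * (Dmat η z).det ^ (-(1/α)))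
        y (Pi.single l 1)) =
        fun y => -(1 + 1/α) * ((Dmat η y).det ^ (-(1/α)) * (Dmat η y)⁻¹ k i *
            ∑ r, ∑ s, (Dmat η y)⁻¹ s r * fderiv ℝ (df η r s) y (Pi.single l 1))
          + ∑ r, ∑ s, ((Dmat η y).det ^ (-(1/α)) *
              ((Dmat η y)⁻¹ k i * (Dmat η y)⁻¹ s r - (Dmat η y)⁻¹ k r * (Dmat η y)⁻¹ s i)) *
              fderiv ℝ (df η r s) y (Pi.single l 1) :=
      funext fun y => key1 hη hJ α l i k y
    rw [hfun]
    have hP0 : DifferentiableAt ℝ (fun y => (Dmat η y).det ^ (-(1/α)) * (Dmat η y)⁻¹ k i *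
        ∑ r, ∑ s, (Dmat η y)⁻¹ s r * fderiv ℝ (df η r s) y (Pi.single l 1)) x :=
      ((hDJp x).mul ((hDA' k i) x)).mul hsum
    have hQ : ∀ r s : Fin 3, DifferentiableAt ℝ (fun y => (Dmat η y).det ^ (-(1/α)) *
        ((Dmat η y)⁻¹ k i * (Dmat η y)⁻¹ s r - (Dmat η y)⁻¹ k r * (Dmat η y)⁻¹ s i)) x :=
      fun r s => (hDJp x).mul ((((hDA' k i) x).mul ((hDA' s r) x)).sub
        (((hDA' k r) x).mul ((hDA' s i) x)))
    have hQH : ∀ r s : Fin 3, DifferentiableAt ℝ (fun y => ((Dmat η y).det ^ (-(1/α)) *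
        ((Dmat η y)⁻¹ k i * (Dmat η y)⁻¹ s r - (Dmat η y)⁻¹ k r * (Dmat η y)⁻¹ s i)) *
        fderiv ℝ (df η r s) y (Pi.single l 1)) x :=
      fun r s => (hQ r s).mul ((hDH' r s _) x)
    rw [fderiv_add_apply' (hP0.const_mul _)
      (DifferentiableAt.fun_sum fun r _ => DifferentiableAt.fun_sum fun s _ => hQH r s)]
    rw [fderiv_const_mul_apply' hP0]
    rw [fderiv_sum_apply' (fun r => DifferentiableAt.fun_sum fun s _ => hQH r s)]
    congr 1
    refine Finset.sum_congr rfl fun r _ => ?_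
    rw [fderiv_sum_apply' (fun s => hQH r s)]
    refine Finset.sum_congr rfl fun s _ => ?_
    rw [fderiv_mul_apply' (hQ r s) ((hDH' r s _) x)]
  rw [Finset.sum_congr rfl fun k _ => hstep k]
  rw [Finset.sum_add_distrib, ← Finset.mul_sum]
  have hsplit : ∑ k : Fin 3, ∑ r : Fin 3, ∑ s : Fin 3,
      (fderiv ℝ (fun y => (Dmat η y).det ^ (-(1/α)) *
          ((Dmat η y)⁻¹ k i * (Dmat η y)⁻¹ s r - (Dmat η y)⁻¹ k r * (Dmat η y)⁻¹ s i))
        x (Pi.single k 1) * fderiv ℝ (df η r s) x (Pi.single l 1)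
      + ((Dmat η x).det ^ (-(1/α)) *
          ((Dmat η x)⁻¹ k i * (Dmat η x)⁻¹ s r - (Dmat η x)⁻¹ k r * (Dmat η x)⁻¹ s i)) *
        fderiv ℝ (fun y => fderiv ℝ (df η r s) y (Pi.single l 1)) x (Pi.single k 1))
      = (∑ k : Fin 3, ∑ r : Fin 3, ∑ s : Fin 3,
          fderiv ℝ (fun y => (Dmat η y).det ^ (-(1/α)) *
            ((Dmat η y)⁻¹ k i * (Dmat η y)⁻¹ s r - (Dmat η y)⁻¹ k r * (Dmat η y)⁻¹ s i))
          x (Pi.single k 1) * fderiv ℝ (df η r s) x (Pi.single l 1))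
        + ∑ k : Fin 3, ∑ r : Fin 3, ∑ s : Fin 3,
          ((Dmat η x).det ^ (-(1/α)) *
            ((Dmat η x)⁻¹ k i * (Dmat η x)⁻¹ s r - (Dmat η x)⁻¹ k r * (Dmat η x)⁻¹ s i)) *
          fderiv ℝ (fun y => fderiv ℝ (df η r s) y (Pi.single l 1)) x (Pi.single k 1) := by
    simp [Finset.sum_add_distrib]
  rw [hsplit]
  have hzero : ∑ k : Fin 3, ∑ r : Fin 3, ∑ s : Fin 3,
      ((Dmat η x).det ^ (-(1/α)) *
        ((Dmat η x)⁻¹ k i * (Dmat η x)⁻¹ s r - (Dmat η x)⁻¹ k r * (Dmat η x)⁻¹ s i)) *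
      fderiv ℝ (fun y => fderiv ℝ (df η r s) y (Pi.single l 1)) x (Pi.single k 1) = 0 := by
    refine sum_cancel _ _ (fun k r s => by ring) (fun k r s => ?_)
    exact (Tsym hη l x k r s).symm
  rw [hzero, add_zero]
end
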